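/- arXiv:1412.7845 — 4 statements merged into one kernel-verified Lean document; each statement's English description precedes it below -/
import Mathlib

section
/- Let x_n be a sequence of independent G-valued random variables such that x̂_n = x_1 x_2 ⋯ x_n converges almost surely in G. Then for every neighborhood V of e, ∑_{n=1}^∞ P(x_n ∈ V^c) < ∞. -/
open MeasureTheory ProbabilityTheory Filter Topology

/-- Ordered product `x 0 * x 1 * ⋯ * x (n-1)` in a (possibly noncommutative) monoid. -/
def partialProd {G : Type*} [Monoid G] (x : ℕ → G) (n : ℕ) : G :=
  ((List.range n).map x).prod

lemma partialProd_succ {G : Type*} [Monoid G] (x : ℕ → G) (n : ℕ) :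
    partialProd x (n + 1) = partialProd x n * x n := by
  simp [partialProd, List.range_succ]

/-- If the products `x_1 ⋯ x_n` of independent `G`-valued random variables converge a.s.,
then for every neighborhood `V` of the identity, `∑ P(x_n ∈ Vᶜ) < ∞`. -/
theorem summable_tail_of_ae_convergence
    {G : Type*} [Group G] [TopologicalSpace G] [IsTopologicalGroup G]
    [MeasurableSpace G] [BorelSpace G]
    {Ω : Type*} [MeasurableSpace Ω] {P : Measure Ω} [IsProbabilityMeasure P]
    {x : ℕ → Ω → G} (hmeas : ∀ n, Measurable (x n))
    (hindep : iIndepFun x P)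
    (hconv : ∀ᵐ ω ∂P, ∃ l : G,
      Tendsto (fun n => partialProd (fun i => x i ω) n) atTop (𝓝 l)) :
    ∀ V ∈ 𝓝 (1 : G), (∑' n, P {ω | x n ω ∈ Vᶜ}) < ⊤ := by
  intro V hV
  obtain ⟨U, hUV, hUopen, hU1⟩ := mem_nhds_iff.1 hV
  set s : ℕ → Set Ω := fun n => x n ⁻¹' Uᶜ with hs_def
  have hsm : ∀ n, MeasurableSet (s n) := fun n =>
    (hmeas n) hUopen.isClosed_compl.measurableSet
  -- independence of the sets
  have hsi : iIndepSet s P := by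
    rw [iIndepSet_iff]
    intro S f hf
    refine (iIndepFun_iff _ _ _).1 hindep S fun i hi => ?_
    have hle : MeasurableSpace.generateFrom {s i} ≤
        MeasurableSpace.comap (x i) inferInstance := by
      refine MeasurableSpace.generateFrom_le fun t ht => ?_
      rw [Set.mem_singleton_iff] at ht
      subst ht
      exact ⟨Uᶜ, hUopen.isClosed_compl.measurableSet, rfl⟩
    exact hle _ (hf i hi)
  -- x n → 1 a.s.
  have hx1 : ∀ᵐ ω ∂P, Tendsto (fun n => x n ω) atTop (𝓝 (1 : G)) := by
    filter_upwards [hconv] with ω ⟨l, hl⟩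
    have h1 : Tendsto (fun n => partialProd (fun i => x i ω) (n + 1)) atTop (𝓝 l) :=
      hl.comp (tendsto_add_atTop_nat 1)
    have h2 : Tendsto (fun n =>
        (partialProd (fun i => x i ω) n)⁻¹ * partialProd (fun i => x i ω) (n + 1))
        atTop (𝓝 (l⁻¹ * l)) := hl.inv.mul h1
    simpa [partialProd_succ] using h2
  -- hence a.s. eventually not in s n, so limsup has measure 0
  have hlim : P (limsup s atTop) = 0 := by
    have : ∀ᵐ ω ∂P, ω ∉ limsup s atTop := by
      filter_upwards [hx1] with ω hω
      rw [mem_limsup_iff_frequently_mem]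
      have : ∀ᶠ n in atTop, x n ω ∈ U := hω (hUopen.mem_nhds hU1)
      simpa [s, not_frequently] using this.mono fun n hn => by simp [hn]
    simpa [ae_iff] using this
  -- second Borel-Cantelli (contrapositive)
  have hsum : (∑' n, P (s n)) ≠ ⊤ := by
    intro h
    have := measure_limsup_eq_one hsm hsi h
    rw [hlim] at this
    exact zero_ne_one this
  calc (∑' n, P {ω | x n ω ∈ Vᶜ}) ≤ ∑' n, P (s n) := by
        refine ENNReal.tsum_le_tsum fun n => measure_mono fun ω hω => ?_
        exact fun hmem => hω (hUV hmem)
      _ < ⊤ := hsum.lt_top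
end

section
/- Let x_n be a sequence of independent G-valued random variables with x_n ∈ U almost surely for every n and with U-truncated means b_n, and suppose x̂_n = x_1 x_2 ⋯ x_n converges almost surely in G. Then b_n → e and E[‖φ(x_n) − φ(b_n)‖²] → 0 as n → ∞. -/
open MeasureTheory ProbabilityTheory Filter Topology
open scoped Manifold

/-- If `x_n ∈ U` almost surely and the products `x_1 ⋯ x_n` converge a.s. in `G`, then the
`U`-truncated means satisfy `b_n → e` and `E[‖φ(x_n) − φ(b_n)‖²] → 0` as `n → ∞`. -/
theorem truncated_means_tendsto_one
    {d : ℕ} {G : Type*} [Group G] [TopologicalSpace G] [IsTopologicalGroup G]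
    [ChartedSpace (EuclideanSpace ℝ (Fin d)) G] [LieGroup (𝓡 d) (⊤ : ℕ∞) G]
    [MeasurableSpace G] [BorelSpace G]
    -- the chart data
    {U : Set G} (hU : U ∈ 𝓝 (1 : G)) (hUcpt : IsCompact (closure U))
    {φ : G → EuclideanSpace ℝ (Fin d)} {W : Set G} (hW : IsOpen W) (hUW : closure U ⊆ W)
    (hφ : ContMDiffOn (𝓡 d) 𝓘(ℝ, EuclideanSpace ℝ (Fin d)) (⊤ : ℕ∞) φ W)
    {ψ : EuclideanSpace ℝ (Fin d) → G}
    (hψ : ContMDiffOn 𝓘(ℝ, EuclideanSpace ℝ (Fin d)) (𝓡 d) (⊤ : ℕ∞) ψ (φ '' U))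
    (hψφ : ∀ g ∈ U, ψ (φ g) = g) (hφψ : ∀ v ∈ φ '' U, φ (ψ v) = v)
    (hconv : Convex ℝ (φ '' U)) (hnhds : φ '' U ∈ 𝓝 (0 : EuclideanSpace ℝ (Fin d)))
    (hφ1 : φ 1 = 0)
    -- the independent random variables
    {Ω : Type*} [MeasurableSpace Ω] {P : Measure Ω} [IsProbabilityMeasure P]
    {x : ℕ → Ω → G} (hmeas : ∀ n, Measurable (x n))
    (hindep : iIndepFun x P)
    (hxU : ∀ n, ∀ᵐ ω ∂P, x n ω ∈ U)
    -- the `U`-truncated means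
    {b : ℕ → G} (hbU : ∀ n, b n ∈ U)
    (hb : ∀ n, φ (b n) = ∫ ω, Set.indicator {ω | x n ω ∈ U} (fun ω => φ (x n ω)) ω ∂P)
    (hconv : ∀ᵐ ω ∂P, ∃ l : G,
      Tendsto (fun n => partialProd (fun i => x i ω) n) atTop (𝓝 l)) :
    Tendsto b atTop (𝓝 (1 : G)) ∧
      Tendsto (fun n => ∫ ω, ‖φ (x n ω) - φ (b n)‖ ^ 2 ∂P) atTop (𝓝 0) := by
  classical
  set s : Set G := closure U with hs
  have hUs : U ⊆ s := subset_closure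
  have h1U : (1 : G) ∈ U := mem_of_mem_nhds hU
  have hφcont : ContinuousOn φ W := hφ.continuousOn
  have hφs : ContinuousOn φ s := hφcont.mono hUW
  obtain ⟨C, hC⟩ := hUcpt.exists_bound_of_continuousOn hφs
  have hC0 : 0 ≤ C := le_trans (norm_nonneg _) (hC 1 (hUs h1U))
  set Φ : G → EuclideanSpace ℝ (Fin d) := s.indicator φ with hΦ
  have hΦmeas : Measurable Φ := by
    have := ContinuousOn.measurable_piecewise (s := s) hφs
      (continuousOn_const (c := (0 : EuclideanSpace ℝ (Fin d))))
      isClosed_closure.measurableSet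
    rw [hΦ, ← Set.piecewise_eq_indicator]; exact this
  have hΦbd : ∀ g, ‖Φ g‖ ≤ C := by
    intro g
    by_cases hg : g ∈ s
    · simpa [hΦ, Set.indicator_of_mem hg] using hC g hg
    · simp [hΦ, Set.indicator_of_notMem hg, hC0]
  -- x n ω → 1 almost surely
  have hx1 : ∀ᵐ ω ∂P, Tendsto (fun n => x n ω) atTop (𝓝 1) := by
    filter_upwards [hconv] with ω hl
    obtain ⟨l, hl⟩ := hl
    have h1 : Tendsto
        (fun n => (partialProd (fun i => x i ω) n)⁻¹ * partialProd (fun i => x i ω) (n + 1))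
        atTop (𝓝 (l⁻¹ * l)) := (hl.inv).mul (hl.comp (tendsto_add_atTop_nat 1))
    rw [inv_mul_cancel] at h1
    refine h1.congr fun n => ?_
    simp [partialProd, List.range_succ]
  have hW1 : W ∈ 𝓝 (1 : G) := hW.mem_nhds (hUW (hUs h1U))
  have hφat1 : ContinuousAt φ 1 := hφcont.continuousAt hW1
  -- Φ(x n ω) → 0 almost surely
  have hΦx : ∀ᵐ ω ∂P, Tendsto (fun n => Φ (x n ω)) atTop (𝓝 0) := by
    filter_upwards [hx1, ae_all_iff.2 hxU] with ω hωx hωU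
    have h2 : Tendsto (fun n => φ (x n ω)) atTop (𝓝 (φ 1)) := hφat1.tendsto.comp hωx
    rw [hφ1] at h2
    exact h2.congr fun n => (Set.indicator_of_mem (hUs (hωU n)) φ).symm
  -- rewrite φ (b n)
  have hint : ∀ n, φ (b n) = ∫ ω, Φ (x n ω) ∂P := by
    intro n
    rw [hb n]
    refine integral_congr_ae ?_
    filter_upwards [hxU n] with ω hω
    rw [Set.indicator_of_mem (show ω ∈ {ω | x n ω ∈ U} from hω), hΦ,
      Set.indicator_of_mem (hUs hω)]
  have hφb : Tendsto (fun n => φ (b n)) atTop (𝓝 0) := by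
    have hd := tendsto_integral_of_dominated_convergence (μ := P) (fun _ => C)
      (fun n => (hΦmeas.comp (hmeas n)).aestronglyMeasurable)
      (integrable_const C)
      (fun n => Eventually.of_forall fun ω => hΦbd _) hΦx
    rw [show (fun n => φ (b n)) = fun n => ∫ ω, Φ (x n ω) ∂P from funext hint]
    simpa using hd
  have hψ0 : ψ 0 = 1 := by rw [← hφ1]; exact hψφ 1 h1U
  have hψcont : ContinuousAt ψ 0 := hψ.continuousOn.continuousAt hnhds
  have hbtend : Tendsto b atTop (𝓝 (1 : G)) := by
    have h3 : Tendsto (fun n => ψ (φ (b n))) atTop (𝓝 (ψ 0)) := hψcont.tendsto.comp hφb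
    rw [hψ0] at h3
    exact h3.congr fun n => hψφ _ (hbU n)
  refine ⟨hbtend, ?_⟩
  -- second part via dominated convergence
  have hbd2 : ∀ n ω, ‖‖Φ (x n ω) - φ (b n)‖ ^ 2‖ ≤ (2 * C) ^ 2 := by
    intro n ω
    rw [Real.norm_eq_abs, abs_of_nonneg (by positivity)]
    have h1 : ‖Φ (x n ω) - φ (b n)‖ ≤ 2 * C := by
      calc ‖Φ (x n ω) - φ (b n)‖ ≤ ‖Φ (x n ω)‖ + ‖φ (b n)‖ := norm_sub_le _ _
        _ ≤ C + C := add_le_add (hΦbd _) (hC _ (hUs (hbU n)))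
        _ = 2 * C := by ring
    exact pow_le_pow_left₀ (norm_nonneg _) h1 2
  have h0 : ∀ᵐ ω ∂P, Tendsto (fun n => ‖Φ (x n ω) - φ (b n)‖ ^ 2) atTop (𝓝 0) := by
    filter_upwards [hΦx] with ω hω
    have := ((hω.sub hφb).norm).pow 2
    simpa using this
  have hd2 := tendsto_integral_of_dominated_convergence (μ := P) (fun _ => (2 * C) ^ 2)
    (fun n => ((((hΦmeas.comp (hmeas n)).sub measurable_const).norm).pow_const 2).aestronglyMeasurable)
    (integrable_const _)
    (fun n => Eventually.of_forall fun ω => hbd2 n ω) h0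
  have heq : ∀ n, ∫ ω, ‖φ (x n ω) - φ (b n)‖ ^ 2 ∂P = ∫ ω, ‖Φ (x n ω) - φ (b n)‖ ^ 2 ∂P := by
    intro n
    refine integral_congr_ae ?_
    filter_upwards [hxU n] with ω hω
    rw [hΦ, Set.indicator_of_mem (hUs hω)]
  rw [show (fun n => ∫ ω, ‖φ (x n ω) - φ (b n)‖ ^ 2 ∂P)
      = fun n => ∫ ω, ‖Φ (x n ω) - φ (b n)‖ ^ 2 ∂P from funext heq]
  simpa using hd2
end

section
/- For each k, let Q^k : [0,∞) → [0,∞) be a nondecreasing function with Q^k(0) = 0, Q^k(t) = Q^k(1) for t ≥ 1, and Q^k(1) ≤ C for a constant C independent of k, satisfying Q^k(t) − Q^k(s) ≤ 2ε(t − s) + ε_k for all 0 ≤ s < t ≤ 1, where ε > 0 is fixed and ε_k → 0 as k → ∞. Let A^k : [0,∞) → Sym_d(ℝ) be functions with values in symmetric d×d matrices such that A^k(0) = 0, A^k(t) − A^k(s) is positive semidefinite for s < t, A^k(t) = A^k(1) for t ≥ 1, and |A^k_{ij}(t) − A^k_{ij}(s)| ≤ Q^k(t) − Q^k(s) for all i,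 j and s < t. Then there exist a subsequence of k → ∞ and a covariance matrix function A (i.e., A is continuous, A(0) = 0, and A(t) − A(s) is positive semidefinite for s < t) with A(t) = A(1) for t ≥ 1 such that A^k(t) → A(t) for every t ≥ 0 along the subsequence. -/
open Filter Topology

open Matrix

/-- Helly-type selection (Lemma 1): a sequence `A^k` of matrix-valued "discrete covariance
functions", whose traces `Q^k` are uniformly bounded and asymptotically equi-continuous,
has a subsequence converging pointwise on `[0,∞)` to a covariance matrix function `A` with
`A(t) = A(1)` for `t ≥ 1`. -/
theorem helly_selection_covariance
    {d : ℕ} {Q : ℕ → ℝ → ℝ} {A : ℕ → ℝ → Matrix (Fin d) (Fin d) ℝ}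
    {C ε : ℝ} (hε : 0 < ε) {εs : ℕ → ℝ} (hεs : Tendsto εs atTop (𝓝 0))
    (hQ0 : ∀ k, Q k 0 = 0)
    (hQnonneg : ∀ k t, 0 ≤ t → 0 ≤ Q k t)
    (hQmono : ∀ k s t, 0 ≤ s → s ≤ t → Q k s ≤ Q k t)
    (hQ1 : ∀ k t, 1 ≤ t → Q k t = Q k 1)
    (hQC : ∀ k, Q k 1 ≤ C)
    (hQinc : ∀ k s t, 0 ≤ s → s < t → t ≤ 1 → Q k t - Q k s ≤ 2 * ε * (t - s) + εs k)
    (hA0 : ∀ k, A k 0 = 0)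
    (hAsymm : ∀ k t, 0 ≤ t → (A k t).IsSymm)
    (hApsd : ∀ k s t, 0 ≤ s → s < t → (A k t - A k s).PosSemidef)
    (hA1 : ∀ k t, 1 ≤ t → A k t = A k 1)
    (hAQ : ∀ k i j s t, 0 ≤ s → s < t → |A k t i j - A k s i j| ≤ Q k t - Q k s) :
    ∃ σ : ℕ → ℕ, StrictMono σ ∧ ∃ B : ℝ → Matrix (Fin d) (Fin d) ℝ,
      ContinuousOn B (Set.Ici (0 : ℝ)) ∧ B 0 = 0 ∧
      (∀ t, 0 ≤ t → (B t).IsSymm) ∧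
      (∀ s t, 0 ≤ s → s < t → (B t - B s).PosSemidef) ∧
      (∀ t, 1 ≤ t → B t = B 1) ∧
      (∀ t, 0 ≤ t → Tendsto (fun k => A (σ k) t) atTop (𝓝 (B t))) := by
  haveI : TopologicalSpace.PseudoMetrizableSpace (Matrix (Fin d) (Fin d) ℝ) :=
    inferInstanceAs (TopologicalSpace.PseudoMetrizableSpace (Fin d → Fin d → ℝ))
  -- `C` is nonnegative
  have hC0 : 0 ≤ C := le_trans (hQnonneg 0 1 zero_le_one) (hQC 0)
  -- uniform entrywise bound on `A k t` for `t ≥ 0`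
  have hQle : ∀ k t, 0 ≤ t → Q k t ≤ C := by
    intro k t ht
    rcases le_total t 1 with h | h
    · exact le_trans (hQmono k t 1 ht h) (hQC k)
    · rw [hQ1 k t h]; exact hQC k
  have hbound : ∀ k t, 0 ≤ t → ∀ i j, |A k t i j| ≤ C := by
    intro k t ht i j
    rcases eq_or_lt_of_le ht with h | h
    · simp [← h, hA0 k, hC0]
    · have h1 := hAQ k i j 0 t le_rfl h
      rw [hA0 k] at h1
      simp only [Matrix.zero_apply, sub_zero, hQ0 k] at h1
      exact h1.trans (hQle k t (le_of_lt h))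
  -- the compact set of matrix-valued functions on `ℚ`
  have hKcpt : IsCompact {m : Matrix (Fin d) (Fin d) ℝ |
      ∀ i, (m i) ∈ {v : Fin d → ℝ | ∀ j, v j ∈ Set.Icc (-C) C}} :=
    isCompact_pi_infinite fun _ => isCompact_pi_infinite fun _ => isCompact_Icc
  have hScpt : IsCompact {g : ℚ → Matrix (Fin d) (Fin d) ℝ |
      ∀ q, g q ∈ {m : Matrix (Fin d) (Fin d) ℝ |
        ∀ i, (m i) ∈ {v : Fin d → ℝ | ∀ j, v j ∈ Set.Icc (-C) C}}} :=
    isCompact_pi_infinite fun _ => hKcpt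
  have hmem : ∀ k, (fun q : ℚ => A k (max (q : ℝ) 0)) ∈ {g : ℚ → Matrix (Fin d) (Fin d) ℝ |
      ∀ q, g q ∈ {m : Matrix (Fin d) (Fin d) ℝ |
        ∀ i, (m i) ∈ {v : Fin d → ℝ | ∀ j, v j ∈ Set.Icc (-C) C}}} := by
    intro k q i j
    exact abs_le.mp (hbound k (max (q : ℝ) 0) (le_max_right _ _) i j)
  obtain ⟨g, -, σ, hσ, hg⟩ := hScpt.tendsto_subseq hmem
  have hεσ : Tendsto (fun k => εs (σ k)) atTop (𝓝 0) := hεs.comp hσ.tendsto_atTop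
  -- pointwise convergence at rational points, entrywise
  have hgq : ∀ (q : ℚ) i j,
      Tendsto (fun k => A (σ k) (max (q : ℝ) 0) i j) atTop (𝓝 (g q i j)) := by
    intro q i j
    exact tendsto_pi_nhds.mp (tendsto_pi_nhds.mp (tendsto_pi_nhds.mp hg q) i) j
  -- entrywise Cauchy at every real point
  have hCauchy : ∀ t : ℝ, ∀ i j, CauchySeq (fun k => A (σ k) (max t 0) i j) := by
    intro t i j
    set t' := max t 0 with ht'
    have ht'0 : 0 ≤ t' := le_max_right _ _
    rcases le_or_gt 1 t' with hone | hone
    · -- equals the sequence at the rational point 1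
      have heq : (fun k => A (σ k) t' i j) = fun k => A (σ k) (max ((1:ℚ) : ℝ) 0) i j := by
        funext k
        rw [hA1 (σ k) t' hone]
        norm_num
      rw [heq]
      exact (hgq 1 i j).cauchySeq
    · rcases eq_or_lt_of_le ht'0 with h0 | h0
      · -- constant zero
        have heq : (fun k => A (σ k) t' i j) = fun _ => (0:ℝ) := by
          funext k; rw [← h0, hA0 (σ k)]; simp
        rw [heq]; exact cauchySeq_const 0
      · -- main case `0 < t' < 1`
        rw [Metric.cauchySeq_iff]
        intro η hη
        set δ : ℝ := η / (8 * (ε + 1)) with hδ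
        have hδpos : 0 < δ := by positivity
        obtain ⟨q, hq1, hq2⟩ := exists_rat_btwn (show max 0 (t' - δ) < t' by
          rcases le_total 0 (t' - δ) with h | h
          · rw [max_eq_right h]; linarith
          · rw [max_eq_left h]; exact h0)
        have hq0 : (0:ℝ) ≤ (q:ℝ) := le_of_lt (lt_of_le_of_lt (le_max_left _ _) hq1)
        have hqδ : t' - (q:ℝ) ≤ δ := by
          have := lt_of_le_of_lt (le_max_right _ _) hq1; linarith
        -- the sequence at `q` converges
        have hvq : Tendsto (fun k => A (σ k) ((q:ℝ)) i j) atTop (𝓝 (g q i j)) := by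
          have h := hgq q i j
          rwa [max_eq_left hq0] at h
        -- quantitative closeness
        have key : ∀ k, |A (σ k) t' i j - A (σ k) (q:ℝ) i j| ≤ 2 * ε * δ + εs (σ k) := by
          intro k
          calc |A (σ k) t' i j - A (σ k) (q:ℝ) i j| ≤ Q (σ k) t' - Q (σ k) (q:ℝ) :=
                hAQ (σ k) i j (q:ℝ) t' hq0 hq2
            _ ≤ 2 * ε * (t' - (q:ℝ)) + εs (σ k) :=
                hQinc (σ k) (q:ℝ) t' hq0 hq2 (le_of_lt hone)
            _ ≤ 2 * ε * δ + εs (σ k) := by nlinarith [hε.le]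
        have h2εδ : 2 * ε * δ ≤ η / 4 := by
          have h8 : (0:ℝ) < 8 * (ε + 1) := by positivity
          rw [hδ, ← mul_div_assoc, div_le_div_iff₀ h8 (by norm_num)]
          nlinarith [hη.le, hε.le]
        have hev : ∀ᶠ k in atTop, |A (σ k) t' i j - g q i j| < η / 2 := by
          have h1 : ∀ᶠ k in atTop, εs (σ k) < η / 8 :=
            hεσ.eventually (eventually_lt_nhds (show (0:ℝ) < η/8 by positivity))
          have h2 : ∀ᶠ k in atTop, |A (σ k) (q:ℝ) i j - g q i j| < η / 8 := by
            have h3 := Metric.tendsto_atTop.mp hvq (η/8) (by positivity)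
            obtain ⟨N, hN⟩ := h3
            refine eventually_atTop.mpr ⟨N, fun n hn => ?_⟩
            have := hN n hn
            rwa [Real.dist_eq] at this
          filter_upwards [h1, h2] with k hk1 hk2
          calc |A (σ k) t' i j - g q i j|
              ≤ |A (σ k) t' i j - A (σ k) (q:ℝ) i j| + |A (σ k) (q:ℝ) i j - g q i j| :=
                abs_sub_le _ _ _
            _ ≤ (2 * ε * δ + εs (σ k)) + |A (σ k) (q:ℝ) i j - g q i j| := by
                have := key k; linarith
            _ < η / 4 + η / 8 + η / 8 := by linarith
            _ = η / 2 := by ring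
        rw [eventually_atTop] at hev
        obtain ⟨N, hN⟩ := hev
        refine ⟨N, fun m hm n hn => ?_⟩
        have h1 := hN m hm
        have h2 := hN n hn
        rw [Real.dist_eq]
        calc |A (σ m) t' i j - A (σ n) t' i j|
            ≤ |A (σ m) t' i j - g q i j| + |g q i j - A (σ n) t' i j| := abs_sub_le _ _ _
          _ < η := by rw [abs_sub_comm (g q i j)]; linarith
  -- define the limit function
  set B : ℝ → Matrix (Fin d) (Fin d) ℝ :=
    fun t => Matrix.of fun i j => limUnder atTop (fun k => A (σ k) (max t 0) i j) with hBdef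
  have hBentry : ∀ t i j,
      Tendsto (fun k => A (σ k) (max t 0) i j) atTop (𝓝 (B t i j)) := by
    intro t i j
    exact (hCauchy t i j).tendsto_limUnder
  have hB : ∀ t, Tendsto (fun k => A (σ k) (max t 0)) atTop (𝓝 (B t)) := by
    intro t
    exact tendsto_pi_nhds.mpr fun i => tendsto_pi_nhds.mpr fun j => hBentry t i j
  have hBt : ∀ t, 0 ≤ t → Tendsto (fun k => A (σ k) t) atTop (𝓝 (B t)) := by
    intro t ht
    have h := hB t
    rwa [max_eq_left ht] at h
  -- constancy beyond 1
  have hB1 : ∀ t, 1 ≤ t → B t = B 1 := by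
    intro t ht
    have heq : (fun k => A (σ k) t) = fun k => A (σ k) 1 := by
      funext k; exact hA1 (σ k) t ht
    refine tendsto_nhds_unique (hBt t (le_trans zero_le_one ht)) ?_
    rw [heq]
    exact hBt 1 zero_le_one
  -- B 0 = 0
  have hB0 : B 0 = 0 := by
    refine tendsto_nhds_unique (hBt 0 le_rfl) ?_
    have heq : (fun k => A (σ k) 0) = fun _ => (0 : Matrix (Fin d) (Fin d) ℝ) := by
      funext k; exact hA0 (σ k)
    rw [heq]
    exact tendsto_const_nhds
  -- symmetry
  have hBsymm : ∀ t, 0 ≤ t → (B t).IsSymm := by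
    intro t ht
    have h1 : Tendsto (fun k => (A (σ k) t).transpose) atTop (𝓝 (B t).transpose) := by
      refine tendsto_pi_nhds.mpr fun i => tendsto_pi_nhds.mpr fun j => ?_
      exact (hBentry t j i).congr (fun k => by rw [max_eq_left ht]; rfl)
    have h2 : (fun k => (A (σ k) t).transpose) = fun k => A (σ k) t := by
      funext k; exact hAsymm (σ k) t ht
    rw [h2] at h1
    exact tendsto_nhds_unique h1 (hBt t ht)
  -- positive semidefiniteness of increments
  have hBpsd : ∀ s t, 0 ≤ s → s < t → (B t - B s).PosSemidef := by
    intro s t hs hst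
    have ht : 0 ≤ t := le_trans hs hst.le
    have hdiff : Tendsto (fun k => A (σ k) t - A (σ k) s) atTop (𝓝 (B t - B s)) :=
      (hBt t ht).sub (hBt s hs)
    rw [Matrix.posSemidef_iff_dotProduct_mulVec]
    constructor
    · -- Hermitian
      rw [Matrix.IsHermitian, Matrix.conjTranspose_eq_transpose_of_trivial]
      have h1 := (hBsymm t ht)
      have h2 := (hBsymm s hs)
      rw [Matrix.IsSymm] at h1 h2
      rw [Matrix.transpose_sub, h1, h2]
    · intro x
      have hcont : Continuous fun m : Matrix (Fin d) (Fin d) ℝ =>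
          dotProduct (star x) (m *ᵥ x) :=
        Continuous.dotProduct continuous_const
          (Continuous.matrix_mulVec continuous_id continuous_const)
    -- limit of nonnegative quantities
      have hq : Tendsto (fun k => dotProduct (star x) ((A (σ k) t - A (σ k) s) *ᵥ x))
          atTop (𝓝 (dotProduct (star x) ((B t - B s) *ᵥ x))) :=
        (hcont.tendsto _).comp hdiff
      refine le_of_tendsto_of_tendsto tendsto_const_nhds hq ?_
      refine Eventually.of_forall fun k => ?_
      exact (hApsd (σ k) s t hs hst).dotProduct_mulVec_nonneg x
  -- Lipschitz bound for entries of B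
  have hBlip : ∀ s t, 0 ≤ s → s ≤ t → ∀ i j, |B t i j - B s i j| ≤ 2 * ε * (t - s) := by
    have main : ∀ s t, 0 ≤ s → s < t → t ≤ 1 → ∀ i j,
        |B t i j - B s i j| ≤ 2 * ε * (t - s) := by
      intro s t hs hst ht1 i j
      have ht : 0 ≤ t := le_trans hs hst.le
      have h1 : Tendsto (fun k => |A (σ k) t i j - A (σ k) s i j|) atTop
          (𝓝 |B t i j - B s i j|) := by
        have ha : Tendsto (fun k => A (σ k) t i j - A (σ k) s i j) atTop
            (𝓝 (B t i j - B s i j)) := by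
          have h := ((hBentry t i j).sub (hBentry s i j))
          rwa [max_eq_left ht, max_eq_left hs] at h
        exact ha.abs
      have h2 : Tendsto (fun k => 2 * ε * (t - s) + εs (σ k)) atTop
          (𝓝 (2 * ε * (t - s))) := by
        have h := (tendsto_const_nhds :
          Tendsto (fun _ : ℕ => 2 * ε * (t - s)) atTop (𝓝 (2 * ε * (t - s)))).add hεσ
        simpa using h
      refine le_of_tendsto_of_tendsto h1 h2 (Eventually.of_forall fun k => ?_)
      calc |A (σ k) t i j - A (σ k) s i j| ≤ Q (σ k) t - Q (σ k) s := hAQ (σ k) i j s t hs hst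
        _ ≤ 2 * ε * (t - s) + εs (σ k) := hQinc (σ k) s t hs hst ht1
    intro s t hs hst i j
    rcases eq_or_lt_of_le hst with rfl | hlt
    · simp
    rcases le_or_gt t 1 with ht1 | ht1
    · exact main s t hs hlt ht1 i j
    rcases le_or_gt 1 s with hs1 | hs1
    · rw [hB1 t (le_trans hs1 hlt.le), hB1 s hs1]
      simp only [sub_self, abs_zero]
      nlinarith [hε.le]
    · rw [hB1 t ht1.le]
      calc |B 1 i j - B s i j| ≤ 2 * ε * (1 - s) := main s 1 hs hs1 le_rfl i j
        _ ≤ 2 * ε * (t - s) := by nlinarith [hε.le]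
  -- continuity on [0, ∞)
  have hBcont : ContinuousOn B (Set.Ici (0 : ℝ)) := by
    refine continuousOn_pi.mpr fun i => continuousOn_pi.mpr fun j => ?_
    have hlip : LipschitzOnWith (Real.toNNReal (2 * ε)) (fun t => B t i j)
        (Set.Ici (0 : ℝ)) := by
      refine LipschitzOnWith.of_dist_le_mul fun x hx y hy => ?_
      rw [Real.dist_eq, Real.dist_eq,
        Real.coe_toNNReal _ (by positivity : (0:ℝ) ≤ 2 * ε)]
      rcases le_total x y with h | h
      · have hxy : |x - y| = y - x := by
          rw [abs_sub_comm]; exact abs_of_nonneg (by linarith)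
        rw [hxy, abs_sub_comm]
        exact hBlip x y hx h i j
      · have hxy : |x - y| = x - y := abs_of_nonneg (by linarith)
        rw [hxy]
        exact hBlip y x hy h i j
    exact hlip.continuousOn
  exact ⟨σ, hσ, B, hBcont, hB0, hBsymm, hBpsd, hB1, hBt⟩
end

section
/- Suppose that for each k we are given partition points 0 = t_{k,m_k} < t_{k,m_k+1} < ⋯ < t_{k,n_k} = 1 with mesh max_p (t_{k,p} − t_{k,p−1}) → 0, probability measures μ_p on G with μ_p(U^c) = 0 and U-truncated means b_p such that b_p → e uniformly over p > m_k as k → ∞, and define A^k_{ij}(t) = ∑_{0 < t_{k,p} ≤ t} ∫_G [φ_i(x) − φ_i(b_p)][φ_j(x) − φ_j(b_p)] μ_p(dx). Assume A^k(t) → A(t) for all t ≥ 0 as k → ∞, where A is a covariance matrix function, and that the trace functions Q^k of A^k satisfy Q^k(t) − Q^k(s) ≤ 2ε(t − s) + ε_k with ε_k → 0. Let Y be a smooth manifold with compatible metric ρ, let y : [0,1] → Y be continuous, and for each k let y^k : [0,1] → Y be a step function constant on each [t_{k,p−1}, t_{k,p}) such that for every t > 0, ρ(y^k(t_{k,p}),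 y(t_{k,p})) → 0 uniformly over t_{k,p} ≤ t as k → ∞. Let F = {F_{ij}} be a bounded continuous matrix-valued function on Y × G. Then for every t > 0, ∑_{0 < t_{k,p} ≤ t} ∑_{i,j=1}^d ∫_G F_{ij}(y^k(t_{k,p−1}), b_p)[φ_i(x) − φ_i(b_p)][φ_j(x) − φ_j(b_p)] μ_p(dx) converges, as k → ∞, to ∑_{i,j=1}^d ∫_0^t F_{ij}(y(s), e) dA_{ij}(s), where dA_{ij} is the Lebesgue–Stieltjes integration against A_{ij}, expressed via the monotone functions A_{ii}, A_{jj}, and t ↦ A_{ii}(t) + A_{jj}(t) + 2A_{ij}(t) (each nondecreasing since A is a covariance matrix function). -/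
open MeasureTheory ProbabilityTheory Filter Topology
open scoped Manifold Classical

/-- Lebesgue–Stieltjes measure of a monotone continuous function (junk value `0` otherwise). -/
noncomputable def lsMeasure (f : ℝ → ℝ) : Measure ℝ :=
  if h : Monotone f ∧ Continuous f then
    StieltjesFunction.measure ⟨f, h.1, fun _ => h.2.continuousWithinAt⟩
  else 0

lemma lsMeasure_Ioc {M : ℝ → ℝ} (h1 : Monotone M) (h2 : Continuous M) (a b : ℝ) :
    lsMeasure M (Set.Ioc a b) = ENNReal.ofReal (M b - M a) := by
  rw [lsMeasure, dif_pos ⟨h1, h2⟩]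
  exact StieltjesFunction.measure_Ioc _ a b

lemma sum_ite_Ioc (σ : ℕ → ℝ) (hσ : Monotone σ) (c : ℝ) (x : ℝ) :
    ∀ N : ℕ, (∑ q ∈ Finset.range N, if σ q < c ∧ c ≤ σ (q+1) then x else 0) =
      if σ 0 < c ∧ c ≤ σ N then x else 0
  | 0 => by
    rw [Finset.sum_range_zero, if_neg (fun h => absurd h.2 (not_le.2 h.1))]
  | (N+1) => by
    rw [Finset.sum_range_succ, sum_ite_Ioc σ hσ c x N]
    by_cases h1 : σ 0 < c
    · by_cases h2 : c ≤ σ N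
      · rw [if_pos ⟨h1, h2⟩, if_neg, if_pos ⟨h1, h2.trans (hσ (Nat.le_succ N))⟩, add_zero]
        rintro ⟨hN, _⟩; exact absurd h2 (not_le.2 hN)
      · rw [if_neg (fun h => h2 h.2), zero_add]
        by_cases h3 : c ≤ σ (N+1)
        · rw [if_pos ⟨not_le.1 h2, h3⟩, if_pos ⟨h1, h3⟩]
        · rw [if_neg (fun h => h3 h.2), if_neg (fun h => h3 h.2)]
    · rw [if_neg (fun h => h1 h.1), zero_add, if_neg (fun h => h1 (lt_of_le_of_lt (hσ (Nat.zero_le N)) h.1)),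
        if_neg (fun h => h1 h.1)]

lemma setIntegral_Ioc_chain {ν : Measure ℝ} {g : ℝ → ℝ} (σ : ℕ → ℝ) (hσ : Monotone σ) :
    ∀ N : ℕ, IntegrableOn g (Set.Ioc (σ 0) (σ N)) ν →
      ∫ s in Set.Ioc (σ 0) (σ N), g s ∂ν
        = ∑ q ∈ Finset.range N, ∫ s in Set.Ioc (σ q) (σ (q+1)), g s ∂ν
  | 0, _ => by simp
  | (N+1), hint => by
    have hsub : Set.Ioc (σ 0) (σ N) ∪ Set.Ioc (σ N) (σ (N+1)) = Set.Ioc (σ 0) (σ (N+1)) :=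
      Set.Ioc_union_Ioc_eq_Ioc (hσ (Nat.zero_le N)) (hσ (Nat.le_succ N))
    rw [Finset.sum_range_succ, ← hsub,
      setIntegral_union (Set.Ioc_disjoint_Ioc_of_le le_rfl) measurableSet_Ioc
        (hint.mono_set (by rw [← hsub]; exact Set.subset_union_left))
        (hint.mono_set (by rw [← hsub]; exact Set.subset_union_right)),
      setIntegral_Ioc_chain σ hσ N (hint.mono_set (by rw [← hsub]; exact Set.subset_union_left))]

set_option maxHeartbeats 1600000 in
set_option maxHeartbeats 1600000 in
lemma core_lemma
    {m n : ℕ → ℕ} (hmn : ∀ k, m k < n k)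
    {t : ℕ → ℕ → ℝ} (ht0 : ∀ k, t k (m k) = 0) (ht1 : ∀ k, t k (n k) = 1)
    (htmono : ∀ k p q, m k ≤ p → p < q → q ≤ n k → t k p < t k q)
    (hmesh : ∀ δ : ℝ, 0 < δ → ∃ K, ∀ k ≥ K, ∀ p, m k < p → p ≤ n k →
      t k p - t k (p - 1) < δ)
    {τ : ℝ} (hτ0 : 0 < τ) (hτ1 : τ ≤ 1)
    {M : ℝ → ℝ} (hMc : Continuous M) (hMm : Monotone M) (hM0 : M 0 = 0)
    {Δ : ℕ → ℕ → ℝ} (hΔ : ∀ k p, 0 ≤ Δ k p)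
    (hMk : ∀ σ : ℝ, 0 ≤ σ → Tendsto
      (fun k => ∑ p ∈ Finset.Ioc (m k) (n k), if t k p ≤ σ then Δ k p else 0)
      atTop (𝓝 (M σ)))
    {f : ℝ → ℝ} (hfc : ContinuousOn f (Set.Icc 0 1))
    {Cf : ℝ} (hCf : 0 ≤ Cf) (hfb : ∀ s ∈ Set.Icc (0:ℝ) 1, |f s| ≤ Cf)
    {fk : ℕ → ℕ → ℝ} (hfkb : ∀ k p, |fk k p| ≤ Cf)
    (hfk : ∀ δ : ℝ, 0 < δ → ∃ K, ∀ k ≥ K, ∀ p, m k + 1 < p → p ≤ n k → t k p ≤ τ →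
        |fk k p - f (t k (p - 1))| < δ) :
    Tendsto (fun k => ∑ p ∈ Finset.Ioc (m k) (n k), if t k p ≤ τ then fk k p * Δ k p else 0)
      atTop (𝓝 (∫ s in Set.Ioc (0:ℝ) τ, f s ∂ lsMeasure M)) := by
  classical
  -- basic facts about the partition
  have hmono' : ∀ k p q, m k ≤ p → p ≤ q → q ≤ n k → t k p ≤ t k q := by
    intro k p q hp hpq hq
    rcases eq_or_lt_of_le hpq with h | h
    · rw [h]
    · exact (htmono k p q hp h hq).le
  have htpos : ∀ k p, m k < p → p ≤ n k → 0 < t k p := by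
    intro k p hp hq
    have := htmono k (m k) p le_rfl hp hq
    rwa [ht0 k] at this
  have htle1 : ∀ k p, m k ≤ p → p ≤ n k → t k p ≤ 1 := by
    intro k p hp hq
    have := hmono' k p (n k) hp hq le_rfl
    rwa [ht1 k] at this
  have htmem : ∀ k p, m k ≤ p → p ≤ n k → t k p ∈ Set.Icc (0:ℝ) 1 := by
    intro k p hp hq
    refine ⟨?_, htle1 k p hp hq⟩
    have := hmono' k (m k) p le_rfl hp hq
    rwa [ht0 k] at this
  -- the cumulative sums
  set S : ℕ → ℝ → ℝ :=
    fun k σ => ∑ p ∈ Finset.Ioc (m k) (n k), if t k p ≤ σ then Δ k p else 0 with hS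
  have hSnn : ∀ k σ, 0 ≤ S k σ := by
    intro k σ
    exact Finset.sum_nonneg fun p _ => by split <;> [exact hΔ k p; exact le_rfl]
  have hSdiff : ∀ k (σ1 σ2 : ℝ), σ1 ≤ σ2 →
      S k σ2 - S k σ1 = ∑ p ∈ Finset.Ioc (m k) (n k),
        if σ1 < t k p ∧ t k p ≤ σ2 then Δ k p else 0 := by
    intro k σ1 σ2 h12
    rw [hS]
    simp only
    rw [← Finset.sum_sub_distrib]
    refine Finset.sum_congr rfl fun p _ => ?_
    by_cases h1 : t k p ≤ σ1
    · rw [if_pos (h1.trans h12), if_pos h1, if_neg (fun h => absurd h1 (not_le.2 h.1)), sub_self]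
    · rw [if_neg h1, sub_zero]
      by_cases h2 : t k p ≤ σ2
      · rw [if_pos h2, if_pos ⟨not_le.1 h1, h2⟩]
      · rw [if_neg h2, if_neg (fun h => h2 h.2)]
  -- measure and integrability facts
  have hνIoc : ∀ a b : ℝ, a ≤ b →
      (lsMeasure M (Set.Ioc a b)).toReal = M b - M a := by
    intro a b hab
    rw [lsMeasure_Ioc hMm hMc, ENNReal.toReal_ofReal (sub_nonneg.2 (hMm hab))]
  have hsubIcc : Set.Ioc (0:ℝ) τ ⊆ Set.Icc (0:ℝ) 1 :=
    fun s hs => ⟨hs.1.le, hs.2.trans hτ1⟩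
  have hfinIoc : ∀ a b : ℝ, lsMeasure M (Set.Ioc a b) < ⊤ := by
    intro a b
    rw [lsMeasure_Ioc hMm hMc]; exact ENNReal.ofReal_lt_top
  have hfinres : IsFiniteMeasure ((lsMeasure M).restrict (Set.Ioc (0:ℝ) τ)) := by
    constructor
    rw [Measure.restrict_apply_univ]
    exact hfinIoc 0 τ
  have hint : IntegrableOn f (Set.Ioc (0:ℝ) τ) (lsMeasure M) := by
    refine Integrable.mono' (integrable_const Cf)
      ((hfc.mono hsubIcc).aestronglyMeasurable measurableSet_Ioc) ?_
    refine (ae_restrict_iff' measurableSet_Ioc).2 (ae_of_all _ fun s hs => ?_)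
    rw [Real.norm_eq_abs]; exact hfb s (hsubIcc hs)
  rw [Metric.tendsto_nhds]
  intro ε' hε'

  -- constants
  have hMτ0 : 0 ≤ M τ := by
    have := hMm (le_of_lt hτ0); rwa [hM0] at this
  set B : ℝ := M τ + 1 with hB
  have hBpos : 0 < B := by rw [hB]; linarith
  set D : ℝ := 2 * B + 1 + M τ with hD
  have hDpos : 0 < D := by rw [hD]; linarith
  set θ : ℝ := ε' / (2 * D) with hθ
  have hθpos : 0 < θ := by rw [hθ]; positivity
  set θ' : ℝ := ε' / (2 * (4 * Cf + 1)) with hθ'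
  have hθ'pos : 0 < θ' := by
    rw [hθ']
    have : (0:ℝ) < 4 * Cf + 1 := by linarith
    positivity
  -- uniform continuity of f
  obtain ⟨δf, hδf, hunif⟩ := Metric.uniformContinuousOn_iff.1
    (isCompact_Icc.uniformContinuousOn_of_continuous hfc) θ hθpos
  -- the grid
  set N : ℕ := max 1 ⌈2 * τ / δf⌉₊ with hN
  have hN1 : (1:ℝ) ≤ (N:ℝ) := by exact_mod_cast Nat.le_max_left 1 ⌈2 * τ / δf⌉₊
  have hNpos : (0:ℝ) < N := lt_of_lt_of_le one_pos hN1
  have hNge : 2 * τ / δf ≤ (N:ℝ) :=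
    le_trans (Nat.le_ceil _) (by exact_mod_cast Nat.le_max_right 1 ⌈2 * τ / δf⌉₊)
  have hτN : τ / N ≤ δf / 2 := by
    rw [div_le_div_iff₀ hNpos two_pos]
    have := (div_le_iff₀ hδf).1 hNge
    linarith
  set σg : ℕ → ℝ := fun q => q * τ / N with hσg
  have hσnn : ∀ q, 0 ≤ σg q := by
    intro q; rw [hσg]
    positivity
  have hσmono : Monotone σg := by
    intro a b hab
    have hab' : (a:ℝ) ≤ (b:ℝ) := by exact_mod_cast hab
    rw [hσg]
    dsimp only
    have h1 : (a:ℝ) * τ ≤ (b:ℝ) * τ := mul_le_mul_of_nonneg_right hab' hτ0.le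
    have h2 : (0:ℝ) ≤ (N:ℝ)⁻¹ := by positivity
    rw [div_eq_mul_inv, div_eq_mul_inv]
    exact mul_le_mul_of_nonneg_right h1 h2
  have hσ0 : σg 0 = 0 := by rw [hσg]; dsimp only; simp
  have hσN : σg N = τ := by
    rw [hσg]
    dsimp only
    rw [mul_comm, mul_div_assoc, div_self hNpos.ne', mul_one]
  have hσstep : ∀ q, σg (q+1) = σg q + τ / N := by
    intro q; rw [hσg]; dsimp only; push_cast; ring
  have hσle1 : ∀ q, q ≤ N → σg q ≤ 1 := by
    intro q hq
    calc σg q ≤ σg N := hσmono hq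
    _ = τ := hσN
    _ ≤ 1 := hτ1
  -- small initial interval
  obtain ⟨η, hηpos, hMη⟩ := Metric.continuousAt_iff.1 (hMc.continuousAt (x := 0)) θ' hθ'pos
  set η' : ℝ := η / 2 with hη'def
  have hη'pos : 0 < η' := by rw [hη'def]; linarith
  have hMη' : M η' < θ' := by
    have h1 : dist η' 0 < η := by
      rw [Real.dist_eq, sub_zero, abs_of_pos hη'pos, hη'def]; linarith
    have := hMη h1
    rw [Real.dist_eq, hM0, sub_zero] at this
    exact lt_of_le_of_lt (le_abs_self _) this
  -- the fixed-grid limit sum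
  set S3 : ℝ := ∑ q ∈ Finset.range N, f (σg q) * (M (σg (q+1)) - M (σg q)) with hS3
  -- eventual events
  obtain ⟨K1, hK1⟩ := hfk θ hθpos
  obtain ⟨K2, hK2⟩ := hmesh (min (δf/2) η') (lt_min (by linarith) hη'pos)
  have hE3 : ∀ᶠ k in atTop, S k τ < B :=
    Filter.Tendsto.eventually_lt_const (by rw [hB]; linarith) (hMk τ hτ0.le)
  have hE4 : ∀ᶠ k in atTop, S k η' < 2 * θ' :=
    Filter.Tendsto.eventually_lt_const (by linarith) (hMk η' hη'pos.le)
  have hS2t : Tendsto (fun k => ∑ q ∈ Finset.range N,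
      f (σg q) * (S k (σg (q+1)) - S k (σg q))) atTop (𝓝 S3) := by
    rw [hS3]
    refine tendsto_finset_sum _ fun q _ => ?_
    exact Filter.Tendsto.const_mul _ ((hMk _ (hσnn (q+1))).sub (hMk _ (hσnn q)))
  have hE5 : ∀ᶠ k in atTop, |(∑ q ∈ Finset.range N,
      f (σg q) * (S k (σg (q+1)) - S k (σg q))) - S3| < θ := by
    filter_upwards [hS2t (Metric.ball_mem_nhds S3 hθpos)] with k hk
    rw [← Real.dist_eq]
    exact hk
  set I : ℝ := ∫ s in Set.Ioc (0:ℝ) τ, f s ∂ lsMeasure M with hI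
  filter_upwards [hE3, hE4, hE5, eventually_ge_atTop K1, eventually_ge_atTop K2]
    with k hk3 hk4 hk5 hkK1 hkK2
  have hmesh' : ∀ p, m k < p → p ≤ n k → t k p - t k (p-1) < min (δf/2) η' := hK2 k hkK2
  set SK : ℝ := ∑ p ∈ Finset.Ioc (m k) (n k), if t k p ≤ τ then fk k p * Δ k p else 0 with hSK
  set S1K : ℝ := ∑ p ∈ Finset.Ioc (m k) (n k),
    if t k p ≤ τ then f (t k (p-1)) * Δ k p else 0 with hS1K
  set S2K : ℝ := ∑ q ∈ Finset.range N, f (σg q) * (S k (σg (q+1)) - S k (σg q)) with hS2K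
  have hmem1 : m k + 1 ∈ Finset.Ioc (m k) (n k) :=
    Finset.mem_Ioc.2 ⟨Nat.lt_succ_self _, hmn k⟩
  -- Estimate (i)
  have hi : |SK - S1K| ≤ θ * S k τ + 2 * Cf * S k η' := by
    have e1 : SK - S1K = ∑ p ∈ Finset.Ioc (m k) (n k),
        if t k p ≤ τ then (fk k p - f (t k (p-1))) * Δ k p else 0 := by
      rw [hSK, hS1K, ← Finset.sum_sub_distrib]
      refine Finset.sum_congr rfl fun p _ => ?_
      split_ifs with hc
      · ring
      · ring
    rw [e1]
    have step1 : |∑ p ∈ Finset.Ioc (m k) (n k),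
        if t k p ≤ τ then (fk k p - f (t k (p-1))) * Δ k p else 0|
        ≤ ∑ p ∈ Finset.Ioc (m k) (n k),
          ((if t k p ≤ τ then θ * Δ k p else 0) +
            (if p = m k + 1 then (if t k p ≤ τ then 2 * Cf * Δ k p else 0) else 0)) := by
      refine (Finset.abs_sum_le_sum_abs _ _).trans (Finset.sum_le_sum fun p hp => ?_)
      obtain ⟨hp1, hp2⟩ := Finset.mem_Ioc.1 hp
      by_cases hc : t k p ≤ τ
      · rw [if_pos hc, if_pos hc, abs_mul, abs_of_nonneg (hΔ k p)]
        by_cases he : p = m k + 1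
        · rw [if_pos he, if_pos hc]
          have hb1 : |fk k p - f (t k (p-1))| ≤ 2 * Cf := by
            have h1 := hfkb k p
            have h2 : |f (t k (p-1))| ≤ Cf := by
              refine hfb _ (htmem k (p-1) ?_ ?_)
              · exact Nat.le_sub_one_of_lt hp1
              · exact le_trans (Nat.sub_le p 1) hp2
            calc |fk k p - f (t k (p-1))|
                = |fk k p + -(f (t k (p-1)))| := by rw [sub_eq_add_neg]
            _ ≤ |fk k p| + |-(f (t k (p-1)))| := abs_add_le _ _
            _ = |fk k p| + |f (t k (p-1))| := by rw [abs_neg]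
            _ ≤ 2 * Cf := by linarith
          have hθΔ : 0 ≤ θ * Δ k p := mul_nonneg hθpos.le (hΔ k p)
          nlinarith [hΔ k p, abs_nonneg (fk k p - f (t k (p-1)))]
        · rw [if_neg he, add_zero]
          have hlt : m k + 1 < p := lt_of_le_of_ne hp1 (Ne.symm he)
          have := hK1 k hkK1 p hlt hp2 hc
          exact mul_le_mul_of_nonneg_right this.le (hΔ k p)
      · rw [if_neg hc, if_neg hc, abs_zero]
        have : (if p = m k + 1 then (if t k p ≤ τ then 2 * Cf * Δ k p else 0) else 0) = 0 := by
          split_ifs <;> rfl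
        rw [this, add_zero]
    rw [Finset.sum_add_distrib] at step1
    have eq2 : ∑ p ∈ Finset.Ioc (m k) (n k), (if t k p ≤ τ then θ * Δ k p else 0)
        = θ * S k τ := by
      rw [hS]
      simp only
      rw [Finset.mul_sum]
      exact Finset.sum_congr rfl fun p _ => by rw [mul_ite, mul_zero]
    have eq3 : ∑ p ∈ Finset.Ioc (m k) (n k),
        (if p = m k + 1 then (if t k p ≤ τ then 2 * Cf * Δ k p else 0) else 0)
        = (if t k (m k + 1) ≤ τ then 2 * Cf * Δ k (m k + 1) else 0) := by
      rw [Finset.sum_ite_eq' (Finset.Ioc (m k) (n k)) (m k + 1)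
        (fun p => if t k p ≤ τ then 2 * Cf * Δ k p else 0), if_pos hmem1]
    have hΔle : Δ k (m k + 1) ≤ S k η' := by
      have ht' : t k (m k + 1) ≤ η' := by
        have h1 := hmesh' (m k + 1) (Nat.lt_succ_self _) (hmn k)
        rw [Nat.add_sub_cancel, ht0 k] at h1
        have := lt_of_lt_of_le h1 (min_le_right _ _)
        linarith
      have hsingle : (if t k (m k + 1) ≤ η' then Δ k (m k + 1) else 0)
          ≤ ∑ p ∈ Finset.Ioc (m k) (n k), if t k p ≤ η' then Δ k p else 0 :=
        Finset.single_le_sum (f := fun p => if t k p ≤ η' then Δ k p else 0)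
          (fun p _ => by by_cases h : t k p ≤ η' <;> simp [h, hΔ k p]) hmem1
      have h2 : (if t k (m k + 1) ≤ η' then Δ k (m k + 1) else 0) ≤ S k η' := by
        rw [hS]; exact hsingle
      rwa [if_pos ht'] at h2
    have eq4 : (if t k (m k + 1) ≤ τ then 2 * Cf * Δ k (m k + 1) else 0)
        ≤ 2 * Cf * S k η' := by
      split_ifs with hc
      · have := mul_le_mul_of_nonneg_left hΔle (by linarith : (0:ℝ) ≤ 2 * Cf)
        linarith
      · exact mul_nonneg (by linarith) (hSnn k η')
    rw [eq2, eq3] at step1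
    linarith [step1, eq4]
  -- Estimate (ii)
  have hii : |S1K - S2K| ≤ θ * S k τ := by
    have e2 : S1K = ∑ q ∈ Finset.range N, ∑ p ∈ Finset.Ioc (m k) (n k),
        if σg q < t k p ∧ t k p ≤ σg (q+1) then f (t k (p-1)) * Δ k p else 0 := by
      rw [hS1K, Finset.sum_comm]
      refine Finset.sum_congr rfl fun p hp => ?_
      rw [sum_ite_Ioc σg hσmono (t k p) _ N, hσ0, hσN]
      obtain ⟨hp1, hp2⟩ := Finset.mem_Ioc.1 hp
      have hpos := htpos k p hp1 hp2
      by_cases hc : t k p ≤ τ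
      · rw [if_pos hc, if_pos ⟨hpos, hc⟩]
      · rw [if_neg hc, if_neg (fun h => hc h.2)]
    have e3 : S2K = ∑ q ∈ Finset.range N, ∑ p ∈ Finset.Ioc (m k) (n k),
        if σg q < t k p ∧ t k p ≤ σg (q+1) then f (σg q) * Δ k p else 0 := by
      rw [hS2K]
      refine Finset.sum_congr rfl fun q hq => ?_
      rw [hSdiff k _ _ (hσmono (Nat.le_succ q)), Finset.mul_sum]
      exact Finset.sum_congr rfl fun p _ => by rw [mul_ite, mul_zero]
    have key : ∀ q ∈ Finset.range N, ∀ p ∈ Finset.Ioc (m k) (n k),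
        σg q < t k p → t k p ≤ σg (q+1) → |f (t k (p-1)) - f (σg q)| ≤ θ := by
      intro q hq p hp h1 h2
      obtain ⟨hp1, hp2⟩ := Finset.mem_Ioc.1 hp
      have hple : m k ≤ p - 1 := Nat.le_sub_one_of_lt hp1
      have hple2 : p - 1 ≤ n k := le_trans (Nat.sub_le p 1) hp2
      have htp1mem := htmem k (p-1) hple hple2
      have hσqmem : σg q ∈ Set.Icc (0:ℝ) 1 :=
        ⟨hσnn q, le_trans h1.le (htle1 k p hp1.le hp2)⟩
      have htlt : t k (p-1) < t k p := by
        refine htmono k (p-1) p hple ?_ hp2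
        exact Nat.sub_lt (Nat.lt_of_le_of_lt (Nat.zero_le _) hp1) one_pos
      have hmeshp := lt_of_lt_of_le (hmesh' p hp1 hp2) (min_le_left _ _)
      have hdist : dist (t k (p-1)) (σg q) < δf := by
        rw [Real.dist_eq, abs_lt]
        have h3 := hσstep q
        constructor
        · linarith
        · linarith
      have := hunif _ htp1mem _ hσqmem hdist
      rw [Real.dist_eq] at this
      exact this.le
    rw [e2, e3, ← Finset.sum_sub_distrib]
    have step2 : ∀ q ∈ Finset.range N,
        |(∑ p ∈ Finset.Ioc (m k) (n k),
          if σg q < t k p ∧ t k p ≤ σg (q+1) then f (t k (p-1)) * Δ k p else 0) -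
         ∑ p ∈ Finset.Ioc (m k) (n k),
          if σg q < t k p ∧ t k p ≤ σg (q+1) then f (σg q) * Δ k p else 0|
        ≤ ∑ p ∈ Finset.Ioc (m k) (n k),
            if σg q < t k p ∧ t k p ≤ σg (q+1) then θ * Δ k p else 0 := by
      intro q hq
      rw [← Finset.sum_sub_distrib]
      refine (Finset.abs_sum_le_sum_abs _ _).trans (Finset.sum_le_sum fun p hp => ?_)
      split_ifs with hc
      · rw [← sub_mul, abs_mul, abs_of_nonneg (hΔ k p)]
        exact mul_le_mul_of_nonneg_right (key q hq p hp hc.1 hc.2) (hΔ k p)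
      · rw [sub_zero, abs_zero]
    have step3 : ∑ q ∈ Finset.range N, ∑ p ∈ Finset.Ioc (m k) (n k),
        (if σg q < t k p ∧ t k p ≤ σg (q+1) then θ * Δ k p else 0) = θ * S k τ := by
      rw [Finset.sum_comm]
      have : ∀ p ∈ Finset.Ioc (m k) (n k),
          ∑ q ∈ Finset.range N, (if σg q < t k p ∧ t k p ≤ σg (q+1) then θ * Δ k p else 0)
          = if t k p ≤ τ then θ * Δ k p else 0 := by
        intro p hp
        rw [sum_ite_Ioc σg hσmono (t k p) _ N, hσ0, hσN]
        obtain ⟨hp1, hp2⟩ := Finset.mem_Ioc.1 hp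
        have hpos := htpos k p hp1 hp2
        by_cases hc : t k p ≤ τ
        · rw [if_pos hc, if_pos ⟨hpos, hc⟩]
        · rw [if_neg hc, if_neg (fun h => hc h.2)]
      rw [Finset.sum_congr rfl this, hS]
      simp only
      rw [Finset.mul_sum]
      exact Finset.sum_congr rfl fun p _ => by rw [mul_ite, mul_zero]
    calc |∑ q ∈ Finset.range N, _| ≤ ∑ q ∈ Finset.range N, ∑ p ∈ Finset.Ioc (m k) (n k),
        (if σg q < t k p ∧ t k p ≤ σg (q+1) then θ * Δ k p else 0) :=
      (Finset.abs_sum_le_sum_abs _ _).trans (Finset.sum_le_sum step2)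
    _ = θ * S k τ := step3
  -- Estimate (iv)
  have hiv : |S3 - I| ≤ θ * M τ := by
    have hIchain : I = ∑ q ∈ Finset.range N,
        ∫ s in Set.Ioc (σg q) (σg (q+1)), f s ∂ lsMeasure M := by
      have h := setIntegral_Ioc_chain σg hσmono N (by rw [hσ0, hσN]; exact hint)
      rw [hσ0, hσN] at h
      rw [hI, h]
    rw [hIchain, hS3, ← Finset.sum_sub_distrib]
    have hstepq : ∀ q ∈ Finset.range N,
        |f (σg q) * (M (σg (q+1)) - M (σg q)) -
          ∫ s in Set.Ioc (σg q) (σg (q+1)), f s ∂ lsMeasure M|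
        ≤ θ * (M (σg (q+1)) - M (σg q)) := by
      intro q hq
      have hq1 : q + 1 ≤ N := Finset.mem_range.1 hq
      have hle : σg q ≤ σg (q+1) := hσmono (Nat.le_succ q)
      have hIocsub : Set.Ioc (σg q) (σg (q+1)) ⊆ Set.Ioc 0 τ := by
        rw [← hσ0, ← hσN]
        exact Set.Ioc_subset_Ioc (hσmono (Nat.zero_le q)) (hσmono hq1)
      have hIccsub : Set.Ioc (σg q) (σg (q+1)) ⊆ Set.Icc (0:ℝ) 1 :=
        fun s hs => hsubIcc (hIocsub hs)
      have hintq : IntegrableOn f (Set.Ioc (σg q) (σg (q+1))) (lsMeasure M) :=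
        hint.mono_set hIocsub
      have hconstint : IntegrableOn (fun _ : ℝ => f (σg q))
          (Set.Ioc (σg q) (σg (q+1))) (lsMeasure M) := by
        refine integrableOn_const ?_
        exact (hfinIoc _ _).ne
      have hconst : ∫ _ in Set.Ioc (σg q) (σg (q+1)), f (σg q) ∂ lsMeasure M
          = f (σg q) * (M (σg (q+1)) - M (σg q)) := by
        rw [setIntegral_const, measureReal_def, hνIoc _ _ hle, smul_eq_mul, mul_comm]
      rw [← hconst, ← integral_sub hconstint hintq]
      have hbound : ∀ s ∈ Set.Ioc (σg q) (σg (q+1)), ‖f (σg q) - f s‖ ≤ θ := by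
        intro s hs
        have hsmem : s ∈ Set.Icc (0:ℝ) 1 := hIccsub hs
        have hσqmem : σg q ∈ Set.Icc (0:ℝ) 1 := ⟨hσnn q, hσle1 q (le_trans (Nat.le_succ q) hq1)⟩
        have hdist : dist (σg q) s < δf := by
          rw [Real.dist_eq, abs_lt]
          have h3 := hσstep q
          obtain ⟨hs1, hs2⟩ := hs
          constructor
          · linarith
          · linarith
        have := hunif _ hσqmem _ hsmem hdist
        rw [Real.dist_eq] at this
        rw [Real.norm_eq_abs]
        exact this.le
      have hnorm := norm_setIntegral_le_of_norm_le_const (μ := lsMeasure M)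
        (s := Set.Ioc (σg q) (σg (q+1))) (f := fun s => f (σg q) - f s)
        (hfinIoc _ _) hbound
      rw [Real.norm_eq_abs, measureReal_def, hνIoc _ _ hle] at hnorm
      exact hnorm
    calc |∑ q ∈ Finset.range N, (f (σg q) * (M (σg (q+1)) - M (σg q)) -
          ∫ s in Set.Ioc (σg q) (σg (q+1)), f s ∂ lsMeasure M)|
        ≤ ∑ q ∈ Finset.range N, |f (σg q) * (M (σg (q+1)) - M (σg q)) -
          ∫ s in Set.Ioc (σg q) (σg (q+1)), f s ∂ lsMeasure M| :=
      Finset.abs_sum_le_sum_abs _ _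
    _ ≤ ∑ q ∈ Finset.range N, θ * (M (σg (q+1)) - M (σg q)) :=
      Finset.sum_le_sum hstepq
    _ = θ * (M (σg N) - M (σg 0)) := by
      rw [← Finset.mul_sum, Finset.sum_range_sub (fun q => M (σg q)) N]
    _ = θ * M τ := by rw [hσ0, hσN, hM0, sub_zero]
  -- assemble
  have htri : |SK - I| ≤ |SK - S1K| + |S1K - S2K| + |S2K - S3| + |S3 - I| := by
    have h1 : SK - I = (SK - S1K) + (S1K - S2K) + (S2K - S3) + (S3 - I) := by ring
    have h2 := abs_add_le (SK - S1K) (S1K - S2K)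
    have h3 := abs_add_le ((SK - S1K) + (S1K - S2K)) (S2K - S3)
    have h4 := abs_add_le ((SK - S1K) + (S1K - S2K) + (S2K - S3)) (S3 - I)
    rw [h1]
    linarith
  have hb1 : θ * S k τ ≤ θ * B := mul_le_mul_of_nonneg_left hk3.le hθpos.le
  have hb2 : 2 * Cf * S k η' ≤ 2 * Cf * (2 * θ') :=
    mul_le_mul_of_nonneg_left hk4.le (by linarith)
  have hθD : θ * D = ε' / 2 := by
    rw [hθ]
    field_simp
  have h4Cf : 4 * Cf * θ' ≤ ε' / 2 := by
    have hc : (0:ℝ) < 2 * (4 * Cf + 1) := by linarith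
    rw [hθ', mul_div_assoc']
    rw [div_le_div_iff₀ hc two_pos]
    nlinarith [mul_nonneg hCf hε'.le]
  have hDexp : θ * B + 2 * Cf * (2 * θ') + θ * B + θ + θ * M τ
      = θ * D + 4 * Cf * θ' := by rw [hD]; ring
  have hfin2 : |SK - I| < ε' := by
    linarith [htri, hi, hii, hk5, hiv, hb1, hb2, hθD, h4Cf, hDexp]
  rw [Real.dist_eq]
  exact hfin2


lemma coord_abs_le_norm {d : ℕ} (v : EuclideanSpace ℝ (Fin d)) (i : Fin d) : |v i| ≤ ‖v‖ := by
  rw [EuclideanSpace.norm_eq]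
  rw [(Real.sqrt_sq_eq_abs (v i)).symm]
  apply Real.sqrt_le_sqrt
  have h := Finset.single_le_sum (f := fun j => ‖v j‖ ^ 2) (fun j _ => sq_nonneg _)
    (Finset.mem_univ i)
  calc v i ^ 2 = ‖v i‖ ^ 2 := by rw [Real.norm_eq_abs, sq_abs]
  _ ≤ ∑ j, ‖v j‖ ^ 2 := h

/-- `∫_{(0,t]} g dA_{ij}`, the Lebesgue–Stieltjes integral against the entry `A_{ij}` of a
covariance matrix function `A`, expressed through the nondecreasing functions `A_{ii}`,
`A_{jj}` and `A_{ii} + A_{jj} + 2 A_{ij}`. -/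
noncomputable def stieltjesIntegralIJ {d : ℕ} (A : ℝ → Matrix (Fin d) (Fin d) ℝ)
    (i j : Fin d) (g : ℝ → ℝ) (t : ℝ) : ℝ :=
  (1 / 2) *
    ((∫ s in Set.Ioc (0 : ℝ) t, g s ∂ lsMeasure fun u => A u i i + A u j j + 2 * A u i j) -
      (∫ s in Set.Ioc (0 : ℝ) t, g s ∂ lsMeasure fun u => A u i i) -
      ∫ s in Set.Ioc (0 : ℝ) t, g s ∂ lsMeasure fun u => A u j j)

/-- The entry `A^k_{ij}(τ) = ∑_{0 < t_{k,p} ≤ τ} ∫ (φ_i(x) − φ_i(b_p))(φ_j(x) − φ_j(b_p)) dμ_p`. -/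
noncomputable def Ak {d : ℕ} {G : Type*} [MeasurableSpace G]
    (φ : G → EuclideanSpace ℝ (Fin d)) (μ : ℕ → Measure G) (b : ℕ → G)
    (t : ℕ → ℝ) (mk nk : ℕ) (τ : ℝ) : Matrix (Fin d) (Fin d) ℝ :=
  Matrix.of fun i j => ∑ p ∈ Finset.Ioc mk nk,
    if t p ≤ τ then ∫ x, (φ x i - φ (b p) i) * (φ x j - φ (b p) j) ∂(μ p) else 0

/-- Lemma 2: convergence of Riemann–Stieltjes type sums
`∑_{0<t_{k,p}≤t} ∑_{i,j} ∫ F_{ij}(y^k(t_{k,p−1}), b_p)(φ_i(x)−φ_i(b_p))(φ_j(x)−φ_j(b_p)) dμ_p`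
to `∑_{i,j} ∫_0^t F_{ij}(y(s), e) dA_{ij}(s)`. -/
theorem riemann_stieltjes_sums_converge
    {d : ℕ} {G : Type*} [Group G] [TopologicalSpace G] [IsTopologicalGroup G]
    [ChartedSpace (EuclideanSpace ℝ (Fin d)) G] [LieGroup (𝓡 d) (⊤ : ℕ∞) G]
    [MeasurableSpace G] [BorelSpace G]
    -- the chart data
    {U : Set G} (hU : U ∈ 𝓝 (1 : G)) (hUcpt : IsCompact (closure U))
    {φ : G → EuclideanSpace ℝ (Fin d)} {W : Set G} (hW : IsOpen W) (hUW : closure U ⊆ W)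
    (hφ : ContMDiffOn (𝓡 d) 𝓘(ℝ, EuclideanSpace ℝ (Fin d)) (⊤ : ℕ∞) φ W)
    {ψ : EuclideanSpace ℝ (Fin d) → G}
    (hψ : ContMDiffOn 𝓘(ℝ, EuclideanSpace ℝ (Fin d)) (𝓡 d) (⊤ : ℕ∞) ψ (φ '' U))
    (hψφ : ∀ g ∈ U, ψ (φ g) = g) (hφψ : ∀ v ∈ φ '' U, φ (ψ v) = v)
    (hconv : Convex ℝ (φ '' U)) (hnhds : φ '' U ∈ 𝓝 (0 : EuclideanSpace ℝ (Fin d)))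
    (hφ1 : φ 1 = 0)
    -- the partitions `0 = t_{k,m_k} < t_{k,m_k+1} < ⋯ < t_{k,n_k} = 1` with mesh → 0
    {m n : ℕ → ℕ} (hmn : ∀ k, m k < n k)
    {t : ℕ → ℕ → ℝ} (ht0 : ∀ k, t k (m k) = 0) (ht1 : ∀ k, t k (n k) = 1)
    (htmono : ∀ k p q, m k ≤ p → p < q → q ≤ n k → t k p < t k q)
    (hmesh : ∀ δ : ℝ, 0 < δ → ∃ K, ∀ k ≥ K, ∀ p, m k < p → p ≤ n k →
      t k p - t k (p - 1) < δ)
    -- the probability measures `μ_p` supported in `U` with truncated means `b_p → e`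
    {μ : ℕ → Measure G} (hμprob : ∀ p, IsProbabilityMeasure (μ p))
    (hμU : ∀ p, μ p Uᶜ = 0)
    {b : ℕ → G} (hbU : ∀ p, b p ∈ U) (hbmean : ∀ p, φ (b p) = ∫ x, φ x ∂(μ p))
    (hbe : ∀ V ∈ 𝓝 (1 : G), ∃ K, ∀ k ≥ K, ∀ p, m k < p → b p ∈ V)
    -- the limiting covariance matrix function `A` (extended by `0` to `t ≤ 0`)
    {A : ℝ → Matrix (Fin d) (Fin d) ℝ} (hAcont : Continuous A)
    (hA0 : ∀ τ : ℝ, τ ≤ 0 → A τ = 0) (hAsymm : ∀ τ, (A τ).IsSymm)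
    (hApsd : ∀ s τ : ℝ, s ≤ τ → (A τ - A s).PosSemidef)
    (hAconv : ∀ τ : ℝ, 0 ≤ τ →
      Tendsto (fun k => Ak φ μ b (t k) (m k) (n k) τ) atTop (𝓝 (A τ)))
    -- equicontinuity of the traces `Q^k`
    {ε : ℝ} (hε : 0 < ε) {εs : ℕ → ℝ} (hεs : Tendsto εs atTop (𝓝 0))
    (hQinc : ∀ k (s τ : ℝ), 0 ≤ s → s < τ → τ ≤ 1 →
      (∑ i, Ak φ μ b (t k) (m k) (n k) τ i i) - (∑ i, Ak φ μ b (t k) (m k) (n k) s i i) ≤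
        2 * ε * (τ - s) + εs k)
    -- the smooth manifold `Y` with compatible metric, the paths `y^k` and `y`
    {E' : Type*} [NormedAddCommGroup E'] [NormedSpace ℝ E']
    {H' : Type*} [TopologicalSpace H'] {I' : ModelWithCorners ℝ E' H'}
    {Y : Type*} [MetricSpace Y] [ChartedSpace H' Y] [IsManifold I' (⊤ : ℕ∞) Y]
    {y : ℝ → Y} (hy : ContinuousOn y (Set.Icc 0 1))
    {yk : ℕ → ℝ → Y}
    (hstep : ∀ k p, m k < p → p ≤ n k →
      ∀ s ∈ Set.Ico (t k (p - 1)) (t k p), yk k s = yk k (t k (p - 1)))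
    (hyconv : ∀ τ : ℝ, 0 < τ → ∀ δ : ℝ, 0 < δ → ∃ K, ∀ k ≥ K, ∀ p, m k < p → p ≤ n k →
      t k p ≤ τ → dist (yk k (t k p)) (y (t k p)) < δ)
    -- the bounded continuous matrix-valued function `F` on `Y × G`
    {F : Y → G → Matrix (Fin d) (Fin d) ℝ}
    (hFcont : Continuous fun q : Y × G => F q.1 q.2)
    (hFbdd : ∃ Cf : ℝ, ∀ u g i j, |F u g i j| ≤ Cf) :
    ∀ τ : ℝ, 0 < τ →
      Tendsto (fun k => ∑ p ∈ Finset.Ioc (m k) (n k), if t k p ≤ τ then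
          ∑ i, ∑ j, ∫ x, F (yk k (t k (p - 1))) (b p) i j *
            ((φ x i - φ (b p) i) * (φ x j - φ (b p) j)) ∂(μ p) else 0)
        atTop
        (𝓝 (∑ i, ∑ j, stieltjesIntegralIJ A i j (fun s => F (y s) 1 i j) τ)) := by
  classical
  -- basic partition facts
  have hmono' : ∀ k p q, m k ≤ p → p ≤ q → q ≤ n k → t k p ≤ t k q := by
    intro k p q hp hpq hq
    rcases eq_or_lt_of_le hpq with h | h
    · rw [h]
    · exact (htmono k p q hp h hq).le
  have htle1 : ∀ k p, m k ≤ p → p ≤ n k → t k p ≤ 1 := by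
    intro k p hp hq
    have := hmono' k p (n k) hp hq le_rfl
    rwa [ht1 k] at this
  -- A is constant from 1 on
  have hA1 : ∀ σ : ℝ, 1 ≤ σ → A σ = A 1 := by
    intro σ hσ
    refine tendsto_nhds_unique ?_ (hAconv 1 zero_le_one)
    refine (hAconv σ (by linarith)).congr fun k => ?_
    unfold Ak
    congr 1
    funext i j
    refine Finset.sum_congr rfl fun p hp => ?_
    obtain ⟨hp1, hp2⟩ := Finset.mem_Ioc.1 hp
    rw [if_pos (le_trans (htle1 k p hp1.le hp2) hσ), if_pos (htle1 k p hp1.le hp2)]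
  -- quadratic forms of increments of A
  have hquad : ∀ u v : ℝ, u ≤ v → ∀ x : Fin d → ℝ,
      0 ≤ dotProduct x ((A v - A u).mulVec x) := by
    intro u v huv x
    have h := (hApsd u v huv).dotProduct_mulVec_nonneg x
    simpa using h
  have hMiiMono : ∀ i : Fin d, Monotone fun u => A u i i := by
    intro i u v huv
    have h := hquad u v huv (Pi.single i 1)
    rw [Matrix.mulVec_single, single_dotProduct] at h
    simp only [MulOpposite.op_one, one_smul, Matrix.col_apply, one_mul, mul_one, Matrix.sub_apply] at h
    linarith
  have hM3Mono : ∀ i j : Fin d, Monotone fun u => A u i i + A u j j + 2 * A u i j := by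
    intro i j u v huv
    have h := hquad u v huv (Pi.single i 1 + Pi.single j 1)
    have hsym : (A v - A u) j i = (A v - A u) i j :=
      ((hAsymm v).sub (hAsymm u)).apply i j
    simp only [Matrix.mulVec_add, Matrix.mulVec_single, add_dotProduct,
      dotProduct_add, single_dotProduct, Pi.add_apply, one_mul, mul_one,
      MulOpposite.op_one, one_smul, Matrix.col_apply, Matrix.sub_apply] at h
    simp only [Matrix.sub_apply] at hsym
    simp only []
    nlinarith [h, hsym]
  have hcEntry : ∀ i j : Fin d, Continuous fun u => A u i j :=
    fun i j => hAcont.matrix_elem i j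
  -- entrywise convergence of the Ak
  have hAkEntry : ∀ (σ : ℝ), 0 ≤ σ → ∀ i j : Fin d,
      Tendsto (fun k => ∑ p ∈ Finset.Ioc (m k) (n k), if t k p ≤ σ then
        ∫ x, (φ x i - φ (b p) i) * (φ x j - φ (b p) j) ∂(μ p) else 0) atTop
        (𝓝 (A σ i j)) := by
    intro σ hσ i j
    have h1 : Continuous fun X : Matrix (Fin d) (Fin d) ℝ => X i j :=
      continuous_id.matrix_elem i j
    exact (h1.tendsto (A σ)).comp (hAconv σ hσ)
  -- measurability and integrability
  have hμW : ∀ p, μ p Wᶜ = 0 := fun p =>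
    measure_mono_null (Set.compl_subset_compl.2 (subset_closure.trans hUW)) (hμU p)
  have haemU : ∀ p, ∀ᵐ x ∂(μ p), x ∈ U := by
    intro p
    rw [MeasureTheory.ae_iff]
    simpa [Set.compl_def] using hμU p
  have haemW : ∀ p, ∀ᵐ x ∂(μ p), x ∈ W := by
    intro p
    rw [MeasureTheory.ae_iff]
    simpa [Set.compl_def] using hμW p
  have hφaesm : ∀ p (i : Fin d), AEStronglyMeasurable (fun x => φ x i) (μ p) := by
    intro p i
    have hc : ContinuousOn (fun x => φ x i) W :=
      (EuclideanSpace.proj (𝕜 := ℝ) i).continuous.comp_continuousOn hφ.continuousOn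
    have h2 := hc.aestronglyMeasurable (μ := μ p) hW.measurableSet
    rwa [Measure.restrict_eq_self_of_ae_mem (haemW p)] at h2
  obtain ⟨C0, hC0⟩ := hUcpt.exists_bound_of_continuousOn (hφ.continuousOn.mono hUW)
  set C1 : ℝ := max C0 0 with hC1
  have hC1nn : 0 ≤ C1 := le_max_right _ _
  have hφbd : ∀ x ∈ U, ∀ i : Fin d, |φ x i| ≤ C1 := by
    intro x hx i
    calc |φ x i| ≤ ‖φ x‖ := coord_abs_le_norm (φ x) i
    _ ≤ C0 := hC0 x (subset_closure hx)
    _ ≤ C1 := le_max_left _ _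
  have hbnd : ∀ p, ∀ᵐ x ∂(μ p), ∀ i : Fin d, |φ x i - φ (b p) i| ≤ 2 * C1 := by
    intro p
    filter_upwards [haemU p] with x hx i
    have h1 := hφbd x hx i
    have h2 := hφbd (b p) (hbU p) i
    calc |φ x i - φ (b p) i| ≤ |φ x i| + |φ (b p) i| := abs_sub _ _
    _ ≤ 2 * C1 := by linarith
  have hintprod : ∀ p (i j : Fin d),
      Integrable (fun x => (φ x i - φ (b p) i) * (φ x j - φ (b p) j)) (μ p) := by
    intro p i j
    haveI := hμprob p
    refine Integrable.mono' (integrable_const ((2 * C1) * (2 * C1)))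
      (((hφaesm p i).sub aestronglyMeasurable_const).mul
        ((hφaesm p j).sub aestronglyMeasurable_const)) ?_
    filter_upwards [hbnd p] with x hx
    rw [Real.norm_eq_abs, abs_mul]
    exact mul_le_mul (hx i) (hx j) (abs_nonneg _) (by linarith)
  -- polarization identity
  have hpol : ∀ p (i j : Fin d),
      ∫ x, ((φ x i - φ (b p) i) + (φ x j - φ (b p) j)) *
        ((φ x i - φ (b p) i) + (φ x j - φ (b p) j)) ∂(μ p)
      = (∫ x, (φ x i - φ (b p) i) * (φ x i - φ (b p) i) ∂(μ p))
        + (∫ x, (φ x j - φ (b p) j) * (φ x j - φ (b p) j) ∂(μ p))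
        + 2 * ∫ x, (φ x i - φ (b p) i) * (φ x j - φ (b p) j) ∂(μ p) := by
    intro p i j
    have h1 := hintprod p i i
    have h2 := hintprod p j j
    have h3 := hintprod p i j
    have heq : (fun x => ((φ x i - φ (b p) i) + (φ x j - φ (b p) j)) *
        ((φ x i - φ (b p) i) + (φ x j - φ (b p) j)))
        = fun x => ((φ x i - φ (b p) i) * (φ x i - φ (b p) i)
          + (φ x j - φ (b p) j) * (φ x j - φ (b p) j))
          + 2 * ((φ x i - φ (b p) i) * (φ x j - φ (b p) j)) := by
      funext x; ring
    have h12 : Integrable (fun x => (φ x i - φ (b p) i) * (φ x i - φ (b p) i)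
        + (φ x j - φ (b p) j) * (φ x j - φ (b p) j)) (μ p) := h1.add h2
    have h32 : Integrable (fun x => 2 * ((φ x i - φ (b p) i) * (φ x j - φ (b p) j)))
        (μ p) := h3.const_mul 2
    rw [heq, integral_add h12 h32, integral_add h1 h2, integral_const_mul]
  intro τ hτ
  set τ' : ℝ := min τ 1 with hτ'def
  have hτ'0 : 0 < τ' := lt_min hτ one_pos
  have hτ'1 : τ' ≤ 1 := min_le_right τ 1
  obtain ⟨Cf0, hCf0⟩ := hFbdd
  set Cf : ℝ := max Cf0 0 with hCfdef
  have hCfnn : 0 ≤ Cf := le_max_right _ _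
  have hFb : ∀ u g (i j : Fin d), |F u g i j| ≤ Cf :=
    fun u g i j => le_trans (hCf0 u g i j) (le_max_left _ _)
  -- uniform closeness of F along the approximating paths
  have hFk : ∀ (i j : Fin d), ∀ δ : ℝ, 0 < δ → ∃ K, ∀ k ≥ K, ∀ p,
      m k + 1 < p → p ≤ n k → t k p ≤ τ' →
      |F (yk k (t k (p-1))) (b p) i j - F (y (t k (p-1))) 1 i j| < δ := by
    intro i j δ hδ
    have hδ2 : 0 < δ / 2 := by linarith
    have hFij : Continuous fun q : Y × G => F q.1 q.2 i j := hFcont.matrix_elem i j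
    have hKY : IsCompact (y '' Set.Icc 0 1) := isCompact_Icc.image_of_continuousOn hy
    have hz : ∀ z ∈ y '' Set.Icc (0:ℝ) 1, ∃ r : ℝ, 0 < r ∧ ∃ V ∈ 𝓝 (1:G),
        ∀ u : Y, dist u z < 2 * r → ∀ g ∈ V, |F u g i j - F z 1 i j| < δ / 2 := by
      intro z hzmem
      have hc : ContinuousAt (fun q : Y × G => F q.1 q.2 i j) (z, 1) := hFij.continuousAt
      have hball : {w : Y × G | |F w.1 w.2 i j - F z 1 i j| < δ / 2} ∈ 𝓝 ((z, (1:G))) := by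
        refine Filter.mem_of_superset (hc (Metric.ball_mem_nhds _ hδ2)) ?_
        intro w hw
        simpa [Metric.mem_ball, Real.dist_eq] using hw
      rw [nhds_prod_eq, Filter.mem_prod_iff] at hball
      obtain ⟨P, hP, Q, hQ, hPQ⟩ := hball
      obtain ⟨r0, hr0, hball0⟩ := Metric.mem_nhds_iff.1 hP
      refine ⟨r0 / 2, by linarith, Q, hQ, fun u hu g hg => ?_⟩
      have hu' : u ∈ Metric.ball z r0 := by
        rw [Metric.mem_ball]
        linarith
      exact hPQ (Set.mk_mem_prod (hball0 hu') hg)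
    choose! r hr V hV hprop using hz
    have hcover : y '' Set.Icc (0:ℝ) 1 ⊆
        ⋃ z : y '' Set.Icc (0:ℝ) 1, Metric.ball (z : Y) (r (z : Y)) := by
      intro w hw
      exact Set.mem_iUnion.2 ⟨⟨w, hw⟩, Metric.mem_ball_self (hr w hw)⟩
    obtain ⟨T, hT⟩ := hKY.elim_finite_subcover
      (fun z : y '' Set.Icc (0:ℝ) 1 => Metric.ball (z : Y) (r (z : Y)))
      (fun z => Metric.isOpen_ball) hcover
    have hy0 : y 0 ∈ y '' Set.Icc (0:ℝ) 1 := ⟨0, ⟨le_rfl, zero_le_one⟩, rfl⟩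
    have hTne : T.Nonempty := by
      by_contra hTe
      rw [Finset.not_nonempty_iff_eq_empty] at hTe
      have := hT hy0
      simp [hTe] at this
    set rmin : ℝ := T.inf' hTne fun z => r (z : Y) with hrmin
    have hrminpos : 0 < rmin := by
      rw [hrmin, Finset.lt_inf'_iff]
      exact fun z _ => hr z z.2
    set Vc : Set G := ⋂ z ∈ T, V ((z : y '' Set.Icc (0:ℝ) 1) : Y) with hVc
    have hVcmem : Vc ∈ 𝓝 (1:G) :=
      (Filter.biInter_finset_mem T).2 fun z _ => hV z z.2
    obtain ⟨K1, hK1⟩ := hbe Vc hVcmem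
    obtain ⟨K2, hK2⟩ := hyconv τ' hτ'0 rmin hrminpos
    refine ⟨max K1 K2, fun k hk p hp1 hp2 hp3 => ?_⟩
    have hk1 : k ≥ K1 := le_trans (le_max_left _ _) hk
    have hk2 : k ≥ K2 := le_trans (le_max_right _ _) hk
    have hmkp : m k < p := lt_trans (Nat.lt_succ_self _) hp1
    have hbV : b p ∈ Vc := hK1 k hk1 p hmkp
    have hmk1 : m k < p - 1 := by omega
    have hp12 : p - 1 ≤ n k := le_trans (Nat.sub_le _ _) hp2
    have htp1lt : t k (p-1) < t k p := htmono k (p-1) p (by omega) (by omega) hp2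
    have htp1 : t k (p-1) ≤ τ' := by linarith
    have hdistyk := hK2 k hk2 (p-1) hmk1 hp12 htp1
    have hymem : y (t k (p-1)) ∈ y '' Set.Icc (0:ℝ) 1 := by
      refine ⟨t k (p-1), ⟨?_, htle1 k (p-1) (by omega) hp12⟩, rfl⟩
      have := hmono' k (m k) (p-1) le_rfl (by omega) hp12
      rwa [ht0 k] at this
    obtain ⟨z, hzT, hzball⟩ := Set.mem_iUnion₂.1 (hT hymem)
    have hrz : rmin ≤ r (z : Y) := Finset.inf'_le _ hzT
    rw [Metric.mem_ball] at hzball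
    have hd1 : dist (yk k (t k (p-1))) (z : Y) < 2 * r (z : Y) := by
      calc dist (yk k (t k (p-1))) (z : Y)
          ≤ dist (yk k (t k (p-1))) (y (t k (p-1))) + dist (y (t k (p-1))) (z : Y) :=
        dist_triangle _ _ _
      _ < 2 * r (z : Y) := by linarith
    have hd2 : dist (y (t k (p-1))) (z : Y) < 2 * r (z : Y) := by
      have := hr z z.2
      linarith
    have hbVz : b p ∈ V ((z : y '' Set.Icc (0:ℝ) 1) : Y) := by
      rw [hVc] at hbV
      exact Set.mem_iInter₂.1 hbV z hzT
    have h1V : (1:G) ∈ V ((z : y '' Set.Icc (0:ℝ) 1) : Y) :=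
      mem_of_mem_nhds (hV z z.2)
    have hq1 := hprop z z.2 (yk k (t k (p-1))) hd1 (b p) hbVz
    have hq2 := hprop z z.2 (y (t k (p-1))) hd2 1 h1V
    calc |F (yk k (t k (p-1))) (b p) i j - F (y (t k (p-1))) 1 i j|
        ≤ |F (yk k (t k (p-1))) (b p) i j - F ((z : y '' Set.Icc (0:ℝ) 1) : Y) 1 i j|
          + |F ((z : y '' Set.Icc (0:ℝ) 1) : Y) 1 i j - F (y (t k (p-1))) 1 i j| :=
      abs_sub_le _ _ _
    _ < δ := by
        rw [abs_sub_comm (F ((z : y '' Set.Icc (0:ℝ) 1) : Y) 1 i j)] at *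
        linarith [hq1, hq2]

  -- per (i,j) convergence
  have hgcont : ∀ i j : Fin d, ContinuousOn (fun s => F (y s) 1 i j) (Set.Icc 0 1) := by
    intro i j
    have h1 : Continuous fun q : Y × G => F q.1 q.2 i j := hFcont.matrix_elem i j
    exact h1.comp_continuousOn (hy.prodMk continuousOn_const)
  have hgb : ∀ i j : Fin d, ∀ s ∈ Set.Icc (0:ℝ) 1, |F (y s) 1 i j| ≤ Cf :=
    fun i j s _ => hFb _ _ i j
  have hM3c : ∀ i j : Fin d, Continuous fun u => A u i i + A u j j + 2 * A u i j :=
    fun i j => ((hcEntry i i).add (hcEntry j j)).add (continuous_const.mul (hcEntry i j))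
  have hA0e : ∀ i j : Fin d, A (0:ℝ) i j = 0 := by
    intro i j
    rw [hA0 0 le_rfl]
    rfl
  have hmain : ∀ i j : Fin d, Tendsto (fun k => ∑ p ∈ Finset.Ioc (m k) (n k),
      if t k p ≤ τ' then F (yk k (t k (p-1))) (b p) i j *
        ∫ x, (φ x i - φ (b p) i) * (φ x j - φ (b p) j) ∂(μ p) else 0) atTop
      (𝓝 (stieltjesIntegralIJ A i j (fun s => F (y s) 1 i j) τ')) := by
    intro i j
    have core1 := core_lemma hmn ht0 ht1 htmono hmesh hτ'0 hτ'1
      (M := fun u => A u i i) (hcEntry i i) (hMiiMono i) (hA0e i i)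
      (Δ := fun k p => ∫ x, (φ x i - φ (b p) i) * (φ x i - φ (b p) i) ∂(μ p))
      (fun k p => integral_nonneg fun x => mul_self_nonneg _)
      (fun σ hσ => hAkEntry σ hσ i i)
      (hgcont i j) hCfnn (hgb i j)
      (fk := fun k p => F (yk k (t k (p-1))) (b p) i j)
      (fun k p => hFb _ _ i j) (hFk i j)
    have core2 := core_lemma hmn ht0 ht1 htmono hmesh hτ'0 hτ'1
      (M := fun u => A u j j) (hcEntry j j) (hMiiMono j) (hA0e j j)
      (Δ := fun k p => ∫ x, (φ x j - φ (b p) j) * (φ x j - φ (b p) j) ∂(μ p))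
      (fun k p => integral_nonneg fun x => mul_self_nonneg _)
      (fun σ hσ => hAkEntry σ hσ j j)
      (hgcont i j) hCfnn (hgb i j)
      (fk := fun k p => F (yk k (t k (p-1))) (b p) i j)
      (fun k p => hFb _ _ i j) (hFk i j)
    have hM30 : A (0:ℝ) i i + A (0:ℝ) j j + 2 * A (0:ℝ) i j = 0 := by
      rw [hA0e i i, hA0e j j, hA0e i j]
      ring
    have hMk3 : ∀ σ : ℝ, 0 ≤ σ → Tendsto (fun k => ∑ p ∈ Finset.Ioc (m k) (n k),
        if t k p ≤ σ then ∫ x, ((φ x i - φ (b p) i) + (φ x j - φ (b p) j)) *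
          ((φ x i - φ (b p) i) + (φ x j - φ (b p) j)) ∂(μ p) else 0) atTop
        (𝓝 (A σ i i + A σ j j + 2 * A σ i j)) := by
      intro σ hσ
      have hsum : ∀ k, (∑ p ∈ Finset.Ioc (m k) (n k), if t k p ≤ σ then
          ∫ x, (φ x i - φ (b p) i) * (φ x i - φ (b p) i) ∂(μ p) else 0)
          + (∑ p ∈ Finset.Ioc (m k) (n k), if t k p ≤ σ then
            ∫ x, (φ x j - φ (b p) j) * (φ x j - φ (b p) j) ∂(μ p) else 0)
          + 2 * (∑ p ∈ Finset.Ioc (m k) (n k), if t k p ≤ σ then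
            ∫ x, (φ x i - φ (b p) i) * (φ x j - φ (b p) j) ∂(μ p) else 0)
          = ∑ p ∈ Finset.Ioc (m k) (n k), if t k p ≤ σ then
            ∫ x, ((φ x i - φ (b p) i) + (φ x j - φ (b p) j)) *
              ((φ x i - φ (b p) i) + (φ x j - φ (b p) j)) ∂(μ p) else 0 := by
        intro k
        rw [Finset.mul_sum, ← Finset.sum_add_distrib, ← Finset.sum_add_distrib]
        refine Finset.sum_congr rfl fun p _ => ?_
        split_ifs with hc
        · rw [hpol p i j]
        · ring
      exact (((hAkEntry σ hσ i i).add (hAkEntry σ hσ j j)).add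
        ((hAkEntry σ hσ i j).const_mul 2)).congr hsum
    have core3 := core_lemma hmn ht0 ht1 htmono hmesh hτ'0 hτ'1
      (M := fun u => A u i i + A u j j + 2 * A u i j) (hM3c i j) (hM3Mono i j) hM30
      (Δ := fun k p => ∫ x, ((φ x i - φ (b p) i) + (φ x j - φ (b p) j)) *
        ((φ x i - φ (b p) i) + (φ x j - φ (b p) j)) ∂(μ p))
      (fun k p => integral_nonneg fun x => mul_self_nonneg _)
      hMk3
      (hgcont i j) hCfnn (hgb i j)
      (fk := fun k p => F (yk k (t k (p-1))) (b p) i j)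
      (fun k p => hFb _ _ i j) (hFk i j)
    have heqk : ∀ k, 1/2 * ((∑ p ∈ Finset.Ioc (m k) (n k), if t k p ≤ τ' then
          F (yk k (t k (p-1))) (b p) i j *
            ∫ x, ((φ x i - φ (b p) i) + (φ x j - φ (b p) j)) *
              ((φ x i - φ (b p) i) + (φ x j - φ (b p) j)) ∂(μ p) else 0)
        - (∑ p ∈ Finset.Ioc (m k) (n k), if t k p ≤ τ' then
          F (yk k (t k (p-1))) (b p) i j *
            ∫ x, (φ x i - φ (b p) i) * (φ x i - φ (b p) i) ∂(μ p) else 0)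
        - (∑ p ∈ Finset.Ioc (m k) (n k), if t k p ≤ τ' then
          F (yk k (t k (p-1))) (b p) i j *
            ∫ x, (φ x j - φ (b p) j) * (φ x j - φ (b p) j) ∂(μ p) else 0))
        = ∑ p ∈ Finset.Ioc (m k) (n k), if t k p ≤ τ' then
            F (yk k (t k (p-1))) (b p) i j *
              ∫ x, (φ x i - φ (b p) i) * (φ x j - φ (b p) j) ∂(μ p) else 0 := by
      intro k
      rw [← Finset.sum_sub_distrib, ← Finset.sum_sub_distrib, Finset.mul_sum]
      refine Finset.sum_congr rfl fun p _ => ?_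
      split_ifs with hc
      · rw [hpol p i j]
        ring
      · ring
    have hcomb := ((core3.sub core1).sub core2).const_mul (1/2 : ℝ)
    exact hcomb.congr heqk
  -- conversion from τ' to τ in the limit
  have hstTau : ∀ i j : Fin d, stieltjesIntegralIJ A i j (fun s => F (y s) 1 i j) τ'
      = stieltjesIntegralIJ A i j (fun s => F (y s) 1 i j) τ := by
    intro i j
    rcases le_or_gt τ 1 with h | h
    · rw [hτ'def, min_eq_left h]
    · have h1τ : (1:ℝ) ≤ τ := h.le
      have hττ' : τ' = 1 := by rw [hτ'def, min_eq_right h1τ]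
      have hAeq : A τ = A 1 := hA1 τ h1τ
      have hset : ∀ Mx : ℝ → ℝ, Monotone Mx → Continuous Mx → Mx τ = Mx τ' →
          Set.Ioc (0:ℝ) τ' =ᵐ[lsMeasure Mx] Set.Ioc (0:ℝ) τ := by
        intro Mx hm hc hMeq
        rw [MeasureTheory.ae_eq_set]
        constructor
        · rw [Set.diff_eq_empty.2 (Set.Ioc_subset_Ioc_right (min_le_left τ 1))]
          exact measure_empty
        · have hnull : lsMeasure Mx (Set.Ioc τ' τ) = 0 := by
            rw [lsMeasure_Ioc hm hc, ← hMeq, sub_self, ENNReal.ofReal_zero]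
          refine measure_mono_null (fun x hx => ?_) hnull
          obtain ⟨⟨hx1, hx2⟩, hx3⟩ := hx
          refine ⟨?_, hx2⟩
          by_contra hcon
          exact hx3 ⟨hx1, not_lt.1 hcon⟩
      have hMeq1 : (fun u => A u i i) τ = (fun u => A u i i) τ' := by
        simp only
        rw [hττ', hAeq]
      have hMeq2 : (fun u => A u j j) τ = (fun u => A u j j) τ' := by
        simp only
        rw [hττ', hAeq]
      have hMeq3 : (fun u => A u i i + A u j j + 2 * A u i j) τ
          = (fun u => A u i i + A u j j + 2 * A u i j) τ' := by
        simp only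
        rw [hττ', hAeq]
      have e1 := setIntegral_congr_set (f := fun s => F (y s) 1 i j)
        (hset _ (hMiiMono i) (hcEntry i i) hMeq1)
      have e2 := setIntegral_congr_set (f := fun s => F (y s) 1 i j)
        (hset _ (hMiiMono j) (hcEntry j j) hMeq2)
      have e3 := setIntegral_congr_set (f := fun s => F (y s) 1 i j)
        (hset _ (hM3Mono i j) (hM3c i j) hMeq3)
      unfold stieltjesIntegralIJ
      rw [e1, e2, e3]
  -- final rearrangement of the prelimit sums
  have hswap : ∀ k, (∑ p ∈ Finset.Ioc (m k) (n k), if t k p ≤ τ then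
      ∑ i, ∑ j, ∫ x, F (yk k (t k (p-1))) (b p) i j *
        ((φ x i - φ (b p) i) * (φ x j - φ (b p) j)) ∂(μ p) else 0)
      = ∑ i, ∑ j, ∑ p ∈ Finset.Ioc (m k) (n k), if t k p ≤ τ' then
          F (yk k (t k (p-1))) (b p) i j *
            ∫ x, (φ x i - φ (b p) i) * (φ x j - φ (b p) j) ∂(μ p) else 0 := by
    intro k
    have e1 : ∀ p ∈ Finset.Ioc (m k) (n k), (if t k p ≤ τ then
        ∑ i, ∑ j, ∫ x, F (yk k (t k (p-1))) (b p) i j *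
          ((φ x i - φ (b p) i) * (φ x j - φ (b p) j)) ∂(μ p) else 0)
        = ∑ i, ∑ j, (if t k p ≤ τ' then F (yk k (t k (p-1))) (b p) i j *
            ∫ x, (φ x i - φ (b p) i) * (φ x j - φ (b p) j) ∂(μ p) else 0) := by
      intro p hp
      obtain ⟨hp1, hp2⟩ := Finset.mem_Ioc.1 hp
      by_cases hc : t k p ≤ τ'
      · rw [if_pos (le_trans hc (min_le_left _ _))]
        refine Finset.sum_congr rfl fun i _ => Finset.sum_congr rfl fun j _ => ?_
        rw [if_pos hc]
        exact integral_const_mul _ _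
      · rw [if_neg (fun h => hc (le_min h (htle1 k p hp1.le hp2)))]
        symm
        exact Finset.sum_eq_zero fun i _ => Finset.sum_eq_zero fun j _ => if_neg hc
    rw [Finset.sum_congr rfl e1, Finset.sum_comm]
    exact Finset.sum_congr rfl fun i _ => Finset.sum_comm
  have hlim : (∑ i, ∑ j, stieltjesIntegralIJ A i j (fun s => F (y s) 1 i j) τ')
      = ∑ i, ∑ j, stieltjesIntegralIJ A i j (fun s => F (y s) 1 i j) τ :=
    Finset.sum_congr rfl fun i _ => Finset.sum_congr rfl fun j _ => hstTau i j
  rw [← hlim]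
  refine Tendsto.congr (fun k => (hswap k).symm) ?_
  exact tendsto_finset_sum _ fun i _ => tendsto_finset_sum _ fun j _ => hmain i j
end
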